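/- arXiv:1910.12516 — 10 statements merged into one kernel-verified Lean document; each statement's English description precedes it below -/
import Mathlib

section
/- Let (C, τ^C) and (Θ, τ^Θ) be compact Hausdorff spaces and let U : Θ × C → ℝ be jointly continuous. Then the function U* : Θ × CL(C) → ℝ defined by U*(θ, D) := sup_{d ∈ D} U(θ, d) is jointly continuous, where Θ × CL(C) carries the product of τ^Θ and the Fell topology τ_F. -/
/-- The hyperspace of nonempty closed subsets of a topological space. -/
def CL (C : Type*) [TopologicalSpace C] : Type _ :=
  {A : Set C // A.Nonempty ∧ IsClosed A}

/-- The subbase for the Fell topology: all sets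
`V⁻ = {A : A ∩ V ≠ ∅}` and `W⁺ = {A : A ⊆ W}` for `V`, `W` nonempty open. -/
def fellSubbasis (C : Type*) [TopologicalSpace C] : Set (Set (CL C)) :=
  {s | (∃ V : Set C, IsOpen V ∧ V.Nonempty ∧ s = {A : CL C | (A.1 ∩ V).Nonempty}) ∨
       (∃ W : Set C, IsOpen W ∧ W.Nonempty ∧ s = {A : CL C | A.1 ⊆ W})}

/-- The Fell topology on the hyperspace of nonempty closed subsets. -/
instance fellTopology (C : Type*) [TopologicalSpace C] : TopologicalSpace (CL C) :=
  TopologicalSpace.generateFrom (fellSubbasis C)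

/-- The agent's indirect utility over menus: `U*(θ, D) = sup_{d ∈ D} U(θ, d)`. -/
noncomputable def Ustar {Θ C : Type*} [TopologicalSpace C]
    (U : Θ × C → ℝ) (θ : Θ) (D : CL C) : ℝ :=
  sSup ((fun d => U (θ, d)) '' D.1)

/-- If `C` and `Θ` are compact Hausdorff and `U : Θ × C → ℝ` is jointly continuous,
then `U*(θ, D) = sup_{d ∈ D} U(θ, d)` is jointly continuous on `Θ × CL(C)`, where
`CL(C)` carries the Fell topology. -/
theorem Ustar_continuous {Θ C : Type*}
    [TopologicalSpace C] [CompactSpace C] [T2Space C]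
    [TopologicalSpace Θ] [CompactSpace Θ] [T2Space Θ]
    (U : Θ × C → ℝ) (hU : Continuous U) :
    Continuous (fun p : Θ × CL C => Ustar U p.1 p.2) := by
  rw [continuous_iff_continuousAt]
  rintro ⟨θ₀, D₀⟩
  rw [ContinuousAt, Metric.tendsto_nhds]
  intro ε hε
  have hcont : ∀ θ : Θ, Continuous fun d => U (θ, d) :=
    fun θ => hU.comp (Continuous.prodMk_right θ)
  have hbdd : ∀ (θ : Θ) (D : CL C), BddAbove ((fun d => U (θ, d)) '' D.1) :=
    fun θ D => (D.2.2.isCompact.image (hcont θ)).bddAbove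
  set M := Ustar U θ₀ D₀ with hM
  obtain ⟨d₀, hd₀, hmax⟩ := D₀.2.2.isCompact.exists_isMaxOn D₀.2.1 (hcont θ₀).continuousOn
  have hMeq : M = U (θ₀, d₀) := by
    apply le_antisymm
    · exact csSup_le (D₀.2.1.image _) (by rintro x ⟨d, hd, rfl⟩; exact hmax hd)
    · exact le_csSup (hbdd θ₀ D₀) ⟨d₀, hd₀, rfl⟩
  -- upper semicontinuity: tube lemma
  have hO : IsOpen {p : Θ × C | U p < M + ε/2} := isOpen_lt hU continuous_const
  have hsub : {θ₀} ×ˢ D₀.1 ⊆ {p : Θ × C | U p < M + ε/2} := by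
    rintro ⟨θ, d⟩ ⟨hθ, hd⟩
    simp only [Set.mem_singleton_iff] at hθ
    simp only [Set.mem_setOf_eq]
    rw [hθ]
    have hd' : d ∈ D₀.1 := hd
    have : U (θ₀, d) ≤ M := le_csSup (hbdd θ₀ D₀) ⟨d, hd', rfl⟩
    linarith
  obtain ⟨N₁, W, hN₁o, hWo, hθN₁, hDW, htube⟩ :=
    generalized_tube_lemma isCompact_singleton D₀.2.2.isCompact hO hsub
  have hθ₀N₁ : θ₀ ∈ N₁ := hθN₁ rfl
  -- lower semicontinuity
  have hO' : IsOpen {p : Θ × C | M - ε/2 < U p} := isOpen_lt continuous_const hU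
  have hmem : (θ₀, d₀) ∈ {p : Θ × C | M - ε/2 < U p} := by
    simp only [Set.mem_setOf_eq, hMeq]; linarith
  obtain ⟨N₂, V, hN₂o, hVo, hθ₀N₂, hd₀V, htube'⟩ := isOpen_prod_iff.mp hO' θ₀ d₀ hmem
  -- Fell open sets
  have hWplus : IsOpen {A : CL C | A.1 ⊆ W} :=
    TopologicalSpace.isOpen_generateFrom_of_mem
      (Or.inr ⟨W, hWo, ⟨d₀, hDW hd₀⟩, rfl⟩)
  have hVminus : IsOpen {A : CL C | (A.1 ∩ V).Nonempty} :=
    TopologicalSpace.isOpen_generateFrom_of_mem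
      (Or.inl ⟨V, hVo, ⟨d₀, hd₀V⟩, rfl⟩)
  have hnhds : (N₁ ∩ N₂) ×ˢ ({A : CL C | A.1 ⊆ W} ∩ {A : CL C | (A.1 ∩ V).Nonempty})
      ∈ nhds (θ₀, D₀) :=
    ((hN₁o.inter hN₂o).prod (hWplus.inter hVminus)).mem_nhds
      ⟨⟨hθ₀N₁, hθ₀N₂⟩, hDW, ⟨d₀, hd₀, hd₀V⟩⟩
  filter_upwards [hnhds] with p hp
  obtain ⟨⟨hpN₁, hpN₂⟩, hpW, d, hdD, hdV⟩ := hp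
  have hub : Ustar U p.1 p.2 ≤ M + ε/2 := by
    apply csSup_le (p.2.2.1.image _)
    rintro x ⟨c, hc, rfl⟩
    exact le_of_lt (htube ⟨hpN₁, hpW hc⟩)
  have hlb : M - ε/2 < Ustar U p.1 p.2 :=
    lt_of_lt_of_le (htube' (Set.mk_mem_prod hpN₂ hdV)) (le_csSup (hbdd p.1 p.2) ⟨d, hdD, rfl⟩)
  rw [Real.dist_eq, abs_sub_lt_iff]
  constructor <;> linarith
end

section
/- Let (C, τ^C) and (Θ, τ^Θ) be compact Hausdorff spaces and let U : Θ × C → ℝ be jointly continuous. Then the correspondence Φ : Θ × CL(C) ⇒ C defined by Φ(θ, D) := argmax_{d ∈ D} U(θ, d) is jointly upper hemicontinuous (equivalently, since C is compact, it has closed graph) and has nonempty compact values, where Θ × CL(C) carries the product of τ^Θ and the Fell topology τ_F. -/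
/-- The agent's argmax correspondence:
`Φ(θ, D) = {d ∈ D : U(θ, d) = sup_{d' ∈ D} U(θ, d')}`. -/
noncomputable def Phi {Θ C : Type*} [TopologicalSpace C]
    (U : Θ × C → ℝ) (θ : Θ) (D : CL C) : Set C :=
  {d ∈ D.1 | U (θ, d) = Ustar U θ D}

lemma Phi_nonempty {Θ C : Type*} [TopologicalSpace C] [CompactSpace C]
    [TopologicalSpace Θ] (U : Θ × C → ℝ) (hU : Continuous U)
    (θ : Θ) (D : CL C) : (Phi U θ D).Nonempty := by
  have hK : IsCompact D.1 := D.2.2.isCompact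
  have hcont : Continuous fun d => U (θ, d) := hU.comp (Continuous.prodMk_right θ)
  obtain ⟨d, hdK, hmax⟩ := hK.exists_isMaxOn D.2.1 hcont.continuousOn
  refine ⟨d, hdK, ?_⟩
  have : IsGreatest ((fun d => U (θ, d)) '' D.1) (U (θ, d)) := by
    constructor
    · exact Set.mem_image_of_mem _ hdK
    · rintro _ ⟨d', hd', rfl⟩
      exact hmax hd'
  exact (this.csSup_eq).symm

/-- If `C` and `Θ` are compact Hausdorff and `U : Θ × C → ℝ` is jointly continuous,
then the argmax correspondence `Φ(θ, D) = argmax_{d ∈ D} U(θ, d)` has nonempty compact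
values and is jointly upper hemicontinuous, equivalently (since `C` is compact) it has
closed graph in `(Θ × CL(C)) × C`, where `CL(C)` carries the Fell topology. -/
theorem Phi_upperHemicontinuous {Θ C : Type*}
    [TopologicalSpace C] [CompactSpace C] [T2Space C]
    [TopologicalSpace Θ] [CompactSpace Θ] [T2Space Θ]
    (U : Θ × C → ℝ) (hU : Continuous U) :
    (∀ (θ : Θ) (D : CL C), (Phi U θ D).Nonempty ∧ IsCompact (Phi U θ D)) ∧
      IsClosed {p : (Θ × CL C) × C | p.2 ∈ Phi U p.1.1 p.1.2} := by
  constructor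
  · intro θ D
    refine ⟨Phi_nonempty U hU θ D, ?_⟩
    have hcont : Continuous fun d => U (θ, d) := hU.comp (Continuous.prodMk_right θ)
    have hcl : IsClosed (Phi U θ D) := by
      have : Phi U θ D = D.1 ∩ (fun d => U (θ, d)) ⁻¹' {Ustar U θ D} := by
        ext d; simp [Phi, Set.mem_setOf_eq]
      rw [this]
      exact D.2.2.inter (isClosed_singleton.preimage hcont)
    exact hcl.isCompact
  · rw [← isOpen_compl_iff, isOpen_iff_forall_mem_open]
    rintro ⟨⟨θ₀, D₀⟩, d₀⟩ hx
    simp only [Set.mem_compl_iff, Set.mem_setOf_eq, Phi, Set.mem_sep_iff] at hx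
    by_cases hd : d₀ ∈ D₀.1
    · -- Case B : d₀ ∈ D₀ but U(θ₀,d₀) < sup
      have hbdd : BddAbove ((fun d => U (θ₀, d)) '' D₀.1) :=
        (D₀.2.2.isCompact.image (hU.comp (Continuous.prodMk_right θ₀))).bddAbove
      have hle : U (θ₀, d₀) ≤ Ustar U θ₀ D₀ :=
        le_csSup hbdd (Set.mem_image_of_mem _ hd)
      have hne : U (θ₀, d₀) ≠ Ustar U θ₀ D₀ := fun h => hx ⟨hd, h⟩
      have hlt : U (θ₀, d₀) < Ustar U θ₀ D₀ := lt_of_le_of_ne hle hne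
      set r : ℝ := (U (θ₀, d₀) + Ustar U θ₀ D₀) / 2 with hr
      have hr1 : U (θ₀, d₀) < r := by rw [hr]; linarith
      have hr2 : r < Ustar U θ₀ D₀ := by rw [hr]; linarith
      obtain ⟨dstar, hdstar, hdstarval⟩ := Phi_nonempty U hU θ₀ D₀
      have h1 : (θ₀, dstar) ∈ U ⁻¹' Set.Ioi r := by
        simp [Set.mem_preimage, hdstarval, hr2]
      have h2 : (θ₀, d₀) ∈ U ⁻¹' Set.Iio r := by
        simp [Set.mem_preimage, hr1]
      obtain ⟨P, V, hP, hV, hθP, hdV, hPV⟩ :=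
        isOpen_prod_iff.mp (isOpen_Ioi.preimage hU) θ₀ dstar h1
      obtain ⟨P', N, hP', hN, hθP', hdN, hPN⟩ :=
        isOpen_prod_iff.mp (isOpen_Iio.preimage hU) θ₀ d₀ h2
      have hVminus : IsOpen {A : CL C | (A.1 ∩ V).Nonempty} :=
        TopologicalSpace.isOpen_generateFrom_of_mem (Or.inl ⟨V, hV, ⟨dstar, hdV⟩, rfl⟩)
      refine ⟨((P ∩ P') ×ˢ {A : CL C | (A.1 ∩ V).Nonempty}) ×ˢ N, ?_, ?_, ?_⟩
      · rintro ⟨⟨θ, D⟩, d⟩ ⟨⟨⟨hθ1, hθ2⟩, hDV⟩, hdn⟩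
        simp only [Set.mem_compl_iff, Set.mem_setOf_eq, Phi, Set.mem_sep_iff]
        rintro ⟨hdD, hdval⟩
        obtain ⟨d', hd'D, hd'V⟩ := hDV
        have hr' : r < U (θ, d') := hPV (Set.mk_mem_prod hθ1 hd'V)
        have hbd : BddAbove ((fun d => U (θ, d)) '' D.1) :=
          (D.2.2.isCompact.image (hU.comp (Continuous.prodMk_right θ))).bddAbove
        have : r < Ustar U θ D :=
          lt_of_lt_of_le hr' (le_csSup hbd (Set.mem_image_of_mem _ hd'D))
        have h' : U (θ, d) < r := hPN (Set.mk_mem_prod hθ2 hdn)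
        rw [hdval] at h'
        exact absurd this (not_lt.mpr h'.le)
      · exact ((hP.inter hP').prod hVminus).prod hN
      · exact ⟨⟨⟨hθP, hθP'⟩, ⟨dstar, hdstar, hdV⟩⟩, hdN⟩
    · -- Case A : d₀ ∉ D₀
      obtain ⟨N, W, hN, hW, hdN, hDW, hNW⟩ :=
        normal_separation isClosed_singleton D₀.2.2
          (Set.disjoint_singleton_left.mpr hd)
      have hWplus : IsOpen {A : CL C | A.1 ⊆ W} :=
        TopologicalSpace.isOpen_generateFrom_of_mem
          (Or.inr ⟨W, hW, D₀.2.1.mono hDW, rfl⟩)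
      refine ⟨(Set.univ ×ˢ {A : CL C | A.1 ⊆ W}) ×ˢ N, ?_, ?_, ?_⟩
      · rintro ⟨⟨θ, D⟩, d⟩ ⟨⟨-, hDW'⟩, hdn⟩
        simp only [Set.mem_compl_iff, Set.mem_setOf_eq, Phi, Set.mem_sep_iff]
        rintro ⟨hdD, -⟩
        exact hNW.le_bot ⟨hdn, hDW' hdD⟩
      · exact ((isOpen_univ.prod hWplus)).prod hN
      · exact ⟨⟨trivial, hDW⟩, hdN (Set.mem_singleton d₀)⟩
end

section
/- Let (C, τ^C) and (Θ, τ^Θ) be compact Hausdorff spaces, U : Θ × C → ℝ jointly continuous, and V : Θ × C → ℝ jointly upper semicontinuous. Then the function V* : Θ × CL(C) → ℝ defined by V*(θ, D) := sup_{d ∈ Φ(θ, D)} V(θ, d), where Φ(θ, D) := argmax_{d ∈ D} U(θ, d), is jointly upper semicontinuous, where Θ × CL(C) carries the product of τ^Θ and the Fell topology τ_F. -/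
/-- The principal's indirect utility over menus:
`V*(θ, D) = sup_{d ∈ Φ(θ, D)} V(θ, d)`. -/
noncomputable def Vstar {Θ C : Type*} [TopologicalSpace C]
    (U V : Θ × C → ℝ) (θ : Θ) (D : CL C) : ℝ :=
  sSup ((fun d => V (θ, d)) '' Phi U θ D)

/-- An ℝ-valued function whose strict sublevel sets at natural numbers are open
is bounded above on any compact set. -/
lemma bddAbove_image_of_open_sublevels {X : Type*} [TopologicalSpace X] {f : X → ℝ}
    {K : Set X} (hK : IsCompact K) (hf : ∀ n : ℕ, IsOpen {x | f x < n}) :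
    BddAbove (f '' K) := by
  obtain ⟨t, ht⟩ := hK.elim_finite_subcover (fun n : ℕ => {x | f x < n}) hf
    (fun x _ => by
      obtain ⟨n, hn⟩ := exists_nat_gt (f x)
      exact Set.mem_iUnion.2 ⟨n, hn⟩)
  refine ⟨(t.sup id : ℕ), ?_⟩
  rintro y ⟨x, hx, rfl⟩
  obtain ⟨n, hn, hxn⟩ := Set.mem_iUnion₂.1 (ht hx)
  have : (n : ℝ) ≤ (t.sup id : ℕ) := by
    exact_mod_cast Nat.cast_le.2 (Finset.le_sup (f := id) hn)
  exact le_trans (le_of_lt hxn) this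

/-- If `C` and `Θ` are compact Hausdorff, `U : Θ × C → ℝ` is jointly continuous and
`V : Θ × C → ℝ` is jointly upper semicontinuous, then
`V*(θ, D) = sup_{d ∈ Φ(θ, D)} V(θ, d)` is jointly upper semicontinuous on
`Θ × CL(C)`, where `CL(C)` carries the Fell topology. -/
theorem Vstar_upperSemicontinuous {Θ C : Type*}
    [TopologicalSpace C] [CompactSpace C] [T2Space C]
    [TopologicalSpace Θ] [CompactSpace Θ] [T2Space Θ]
    (U V : Θ × C → ℝ) (hU : Continuous U) (hV : UpperSemicontinuous V) :
    UpperSemicontinuous (fun p : Θ × CL C => Vstar U V p.1 p.2) := by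
  -- sup of U over a nonempty closed set is attained
  have key : ∀ (θ : Θ) (D : CL C), ∃ d ∈ D.1, U (θ, d) = Ustar U θ D := by
    intro θ D
    have hDc : IsCompact D.1 := D.2.2.isCompact
    obtain ⟨d, hdD, hmax⟩ := hDc.exists_isMaxOn D.2.1
      ((hU.comp (Continuous.prodMk_right θ)).continuousOn)
    refine ⟨d, hdD, ?_⟩
    have hg : IsGreatest ((fun d => U (θ, d)) '' D.1) (U (θ, d)) := by
      refine ⟨Set.mem_image_of_mem _ hdD, ?_⟩
      rintro y ⟨x, hx, rfl⟩
      simpa using hmax hx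
    exact hg.csSup_eq.symm
  have hbddU : ∀ (θ : Θ) (D : CL C), BddAbove ((fun d => U (θ, d)) '' D.1) := by
    intro θ D
    exact (D.2.2.isCompact.image (hU.comp (Continuous.prodMk_right θ))).bddAbove
  rintro ⟨θ₀, D₀⟩ y hy
  simp only at hy
  set y' : ℝ := (Vstar U V θ₀ D₀ + y) / 2 with hy'def
  have hy'1 : Vstar U V θ₀ D₀ < y' := by simp only [hy'def]; linarith
  have hy'2 : y' < y := by simp only [hy'def]; linarith
  have hD₀c : IsCompact D₀.1 := D₀.2.2.isCompact
  set u := Ustar U θ₀ D₀ with hu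
  -- Φ₀ is compact
  set Φ₀ : Set C := Phi U θ₀ D₀ with hΦ₀
  have hΦ₀closed : IsClosed Φ₀ := by
    have : Φ₀ = D₀.1 ∩ (fun d => U (θ₀, d)) ⁻¹' {u} := by
      ext d; simp [hΦ₀, Phi, Set.mem_sep_iff, hu]
    rw [this]
    exact D₀.2.2.inter (IsClosed.preimage (hU.comp (Continuous.prodMk_right θ₀)) isClosed_singleton)
  have hΦ₀sub : Φ₀ ⊆ D₀.1 := fun d hd => hd.1
  have hΦ₀c : IsCompact Φ₀ := hD₀c.of_isClosed_subset hΦ₀closed hΦ₀sub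
  obtain ⟨dstar, hdD₀, hdmax⟩ := key θ₀ D₀
  have hdΦ₀ : dstar ∈ Φ₀ := ⟨hdD₀, hdmax⟩
  -- G = {V < y'} is open and contains {θ₀} × Φ₀
  have hGopen : IsOpen {p : Θ × C | V p < y'} := hV.isOpen_preimage y'
  have hbddV : BddAbove ((fun d => V (θ₀, d)) '' Φ₀) := by
    apply bddAbove_image_of_open_sublevels hΦ₀c
    intro n
    exact (hV.isOpen_preimage n).preimage (Continuous.prodMk_right θ₀)
  have hGsub : Set.singleton θ₀ ×ˢ Φ₀ ⊆ {p : Θ × C | V p < y'} := by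
    rintro ⟨θ, d⟩ ⟨hθ, hd⟩
    have hθ' : θ = θ₀ := hθ
    simp only [Set.mem_setOf_eq, hθ']
    exact lt_of_le_of_lt (le_csSup hbddV (Set.mem_image_of_mem _ hd)) hy'1
  obtain ⟨N₁, W₁, hN₁o, hW₁o, hθN₁, hΦW₁, htube₁⟩ :=
    generalized_tube_lemma isCompact_singleton hΦ₀c hGopen hGsub
  -- K = D₀ \ W₁ is compact, U(θ₀,·) < u - 2ε on K for some ε > 0
  set K : Set C := D₀.1 \ W₁ with hK
  have hKc : IsCompact K := hD₀c.of_isClosed_subset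
    (D₀.2.2.inter hW₁o.isClosed_compl) Set.diff_subset
  have hεex : ∃ ε : ℝ, 0 < ε ∧ ∀ d ∈ K, U (θ₀, d) < u - 2 * ε := by
    rcases K.eq_empty_or_nonempty with hKe | hKne
    · exact ⟨1, one_pos, by rw [hKe]; rintro d ⟨⟩⟩
    · obtain ⟨m, hmK, hmmax⟩ := hKc.exists_isMaxOn hKne
        ((hU.comp (Continuous.prodMk_right θ₀)).continuousOn)
      have hmlt : U (θ₀, m) < u := by
        have hle : U (θ₀, m) ≤ u :=
          le_csSup (hbddU θ₀ D₀) (Set.mem_image_of_mem _ hmK.1)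
        rcases lt_or_eq_of_le hle with h | h
        · exact h
        · exact absurd (hΦW₁ ⟨hmK.1, h⟩) hmK.2
      refine ⟨(u - U (θ₀, m)) / 3, by linarith, fun d hd => ?_⟩
      have := hmmax hd
      simp only [Function.comp, Set.mem_setOf_eq] at this
      linarith
  obtain ⟨ε, hε, hKbound⟩ := hεex
  -- tube around {θ₀} × K inside {U < u - 2ε}
  have hAopen : IsOpen {p : Θ × C | U p < u - 2 * ε} :=
    isOpen_lt hU continuous_const
  have hAsub : Set.singleton θ₀ ×ˢ K ⊆ {p : Θ × C | U p < u - 2 * ε} := by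
    rintro ⟨θ, d⟩ ⟨hθ, hd⟩
    have hθ' : θ = θ₀ := hθ
    simp only [Set.mem_setOf_eq, hθ']
    exact hKbound d hd
  obtain ⟨N₂, W₂, hN₂o, hW₂o, hθN₂, hKW₂, htube₂⟩ :=
    generalized_tube_lemma isCompact_singleton hKc hAopen hAsub
  -- neighborhood of (θ₀, dstar) inside {U > u - ε}
  have hBopen : IsOpen {p : Θ × C | u - ε < U p} := isOpen_lt continuous_const hU
  have hdB : (θ₀, dstar) ∈ {p : Θ × C | u - ε < U p} := by
    simp only [Set.mem_setOf_eq, hdmax]; linarith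
  obtain ⟨N₃, Vb, hN₃o, hVbo, hθN₃, hdVb, htube₃⟩ :=
    isOpen_prod_iff.1 hBopen θ₀ dstar hdB
  -- the Fell neighborhood
  set W : Set C := W₁ ∪ W₂ with hW
  have hD₀W : D₀.1 ⊆ W := by
    intro d hd
    by_cases hdW₁ : d ∈ W₁
    · exact Or.inl hdW₁
    · exact Or.inr (hKW₂ ⟨hd, hdW₁⟩)
  have hS₁ : IsOpen {A : CL C | A.1 ⊆ W} :=
    TopologicalSpace.isOpen_generateFrom_of_mem
      (Or.inr ⟨W, hW₁o.union hW₂o, ⟨dstar, Or.inl (hΦW₁ hdΦ₀)⟩, rfl⟩)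
  have hS₂ : IsOpen {A : CL C | (A.1 ∩ Vb).Nonempty} :=
    TopologicalSpace.isOpen_generateFrom_of_mem
      (Or.inl ⟨Vb, hVbo, ⟨dstar, hdVb⟩, rfl⟩)
  -- the product neighborhood
  set O : Set (Θ × CL C) :=
    (N₁ ∩ N₂ ∩ N₃) ×ˢ ({A : CL C | A.1 ⊆ W} ∩ {A : CL C | (A.1 ∩ Vb).Nonempty}) with hO
  have hOopen : IsOpen O :=
    (((hN₁o.inter hN₂o).inter hN₃o)).prod (hS₁.inter hS₂)
  have hmemO : (θ₀, D₀) ∈ O := by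
    refine ⟨⟨⟨hθN₁ rfl, hθN₂ rfl⟩, hθN₃⟩, hD₀W, ⟨dstar, hdD₀, hdVb⟩⟩
  -- main estimate on O
  have hmain : ∀ p ∈ O, Vstar U V p.1 p.2 ≤ y' := by
    rintro ⟨θ, D⟩ ⟨⟨⟨hθ₁, hθ₂⟩, hθ₃⟩, hDW, dv, hdvD, hdvVb⟩
    -- Ustar U θ D > u - ε
    have hUstar_lb : u - ε < Ustar U θ D := by
      have h1 : u - ε < U (θ, dv) := htube₃ ⟨hθ₃, hdvVb⟩
      exact lt_of_lt_of_le h1 (le_csSup (hbddU θ D) (Set.mem_image_of_mem _ hdvD))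
    -- every element of Φ(θ, D) lies in W₁
    have hΦW : ∀ d ∈ Phi U θ D, d ∈ W₁ := by
      rintro d ⟨hdD, hdeq⟩
      rcases hDW hdD with h | h
      · exact h
      · exfalso
        have h2 : U (θ, d) < u - 2 * ε := htube₂ ⟨hθ₂, h⟩
        rw [hdeq] at h2
        linarith
    -- so V(θ, d) < y' on Φ(θ, D)
    have hVbound : ∀ x ∈ (fun d => V (θ, d)) '' Phi U θ D, x ≤ y' := by
      rintro x ⟨d, hd, rfl⟩
      exact le_of_lt (htube₁ ⟨hθ₁, hΦW d hd⟩)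
    -- Φ(θ, D) is nonempty
    obtain ⟨dm, hdmD, hdmeq⟩ := key θ D
    exact csSup_le ⟨V (θ, dm), Set.mem_image_of_mem _ ⟨hdmD, hdmeq⟩⟩ hVbound
  -- conclude
  refine Filter.mem_of_superset (hOopen.mem_nhds hmemO) ?_
  intro p hp
  exact lt_of_le_of_lt (hmain p hp) hy'2
end

section
/- Let (C, τ^C) and (Θ, τ^Θ) be compact Hausdorff spaces, U : Θ × C → ℝ jointly continuous, u̲ : Θ → ℝ a reservation-utility function, and suppose there exists c* ∈ C with U(θ, c*) ≥ u̲(θ) for all θ ∈ Θ. Then the set of individually rational menus T := {D ∈ CL(C) : sup_{d ∈ D} U(θ, d) ≥ u̲(θ) for all θ ∈ Θ} is a nonempty compact subset of CL(C) with the Fell topology. -/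
open Set Filter

theorem fell_compactSpace {C : Type*} [TopologicalSpace C] [CompactSpace C] :
    CompactSpace (CL C) := by
  constructor
  rw [isCompact_iff_ultrafilter_le_nhds]
  intro f _
  set A : Set C := {x | ∀ V : Set C, IsOpen V → x ∈ V →
      {B : CL C | (B.1 ∩ V).Nonempty} ∈ f} with hAdef
  have key : ∀ x ∉ A, ∃ V : Set C, IsOpen V ∧ x ∈ V ∧
      {B : CL C | (B.1 ∩ V).Nonempty} ∉ f := by
    intro x hx
    simp only [hAdef, mem_setOf_eq, not_forall] at hx
    obtain ⟨V, hVo, hxV, hVf⟩ := hx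
    exact ⟨V, hVo, hxV, hVf⟩
  have hAclosed : IsClosed A := by
    rw [← isOpen_compl_iff, isOpen_iff_forall_mem_open]
    intro x hx
    obtain ⟨V, hVo, hxV, hVf⟩ := key x hx
    exact ⟨V, fun y hy hyA => hVf (hyA V hVo hy), hVo, hxV⟩
  have hAne : A.Nonempty := by
    by_contra hA
    rw [not_nonempty_iff_eq_empty] at hA
    have h1 : ∀ x : C, ∃ V : Set C, IsOpen V ∧ x ∈ V ∧
        {B : CL C | (B.1 ∩ V).Nonempty} ∉ f := fun x => key x (by simp [hA])
    choose V hVo hVmem hVf using h1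
    obtain ⟨t, ht⟩ := IsCompact.elim_finite_subcover (isCompact_univ (X := C)) V hVo
      (fun x _ => mem_iUnion.2 ⟨x, hVmem x⟩)
    have hmem : (⋂ x ∈ t, {B : CL C | (B.1 ∩ V x).Nonempty}ᶜ) ∈ f :=
      (biInter_mem t.finite_toSet).2 fun x _ =>
        Ultrafilter.compl_mem_iff_notMem.2 (hVf x)
    obtain ⟨B, hB⟩ := Filter.nonempty_of_mem hmem
    obtain ⟨b, hb⟩ := B.2.1
    obtain ⟨x, hxt, hbx⟩ := mem_iUnion₂.1 (ht (mem_univ b))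
    exact mem_iInter₂.1 hB x hxt ⟨b, hb, hbx⟩
  refine ⟨⟨A, hAne, hAclosed⟩, ?_⟩
  erw [TopologicalSpace.nhds_generateFrom]
  simp only [le_iInf_iff, le_principal_iff, mem_setOf_eq, and_imp]
  refine ⟨mem_univ _, fun s hAs hsg => ?_⟩
  rcases hsg with ⟨V, hVo, -, rfl⟩ | ⟨W, hWo, -, rfl⟩
  · obtain ⟨x, hxA, hxV⟩ := hAs
    exact hxA V hVo hxV
  · by_contra hWf
    have hcompl : {B : CL C | B.1 ⊆ W}ᶜ ∈ f :=
      Ultrafilter.compl_mem_iff_notMem.2 hWf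
    have hKcomp : IsCompact Wᶜ := hWo.isClosed_compl.isCompact
    have h1 : ∀ x : ↥(Wᶜ), ∃ V : Set C, IsOpen V ∧ (x : C) ∈ V ∧
        {B : CL C | (B.1 ∩ V).Nonempty} ∉ f := by
      intro x
      exact key x (fun hxA => x.2 (hAs hxA))
    choose V hVo' hVmem hVf using h1
    obtain ⟨t, ht⟩ := hKcomp.elim_finite_subcover V hVo'
      (fun y hy => mem_iUnion.2 ⟨⟨y, hy⟩, hVmem ⟨y, hy⟩⟩)
    have hmem : ({B : CL C | B.1 ⊆ W}ᶜ ∩ ⋂ x ∈ t, {B : CL C | (B.1 ∩ V x).Nonempty}ᶜ) ∈ f :=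
      inter_mem hcompl <| (biInter_mem t.finite_toSet).2 fun x _ =>
        Ultrafilter.compl_mem_iff_notMem.2 (hVf x)
    obtain ⟨B, hB1, hB2⟩ := Filter.nonempty_of_mem hmem
    obtain ⟨b, hbB, hbW⟩ := not_subset.1 hB1
    obtain ⟨x, hxt, hbx⟩ := mem_iUnion₂.1 (ht hbW)
    exact mem_iInter₂.1 hB2 x hxt ⟨b, hbB, hbx⟩

/-- The set of individually rational menus:
`T = {D ∈ CL(C) : sup_{d ∈ D} U(θ, d) ≥ u̲(θ) for all θ}`. -/
noncomputable def menusIR {Θ C : Type*} [TopologicalSpace C]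
    (U : Θ × C → ℝ) (ulow : Θ → ℝ) : Set (CL C) :=
  {D : CL C | ∀ θ : Θ, ulow θ ≤ Ustar U θ D}

/-- If `C` and `Θ` are compact Hausdorff, `U : Θ × C → ℝ` is jointly continuous,
`u̲ : Θ → ℝ` a reservation-utility function, and some contract `c*` satisfies
`U(θ, c*) ≥ u̲(θ)` for all `θ`, then the set `T` of individually rational menus is a
nonempty compact subset of `CL(C)` with the Fell topology. -/
theorem menusIR_nonempty_isCompact {Θ C : Type*}
    [TopologicalSpace C] [CompactSpace C] [T2Space C]
    [TopologicalSpace Θ] [CompactSpace Θ] [T2Space Θ]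
    (U : Θ × C → ℝ) (hU : Continuous U) (ulow : Θ → ℝ)
    (hIR : ∃ cstar : C, ∀ θ : Θ, ulow θ ≤ U (θ, cstar)) :
    (menusIR U ulow).Nonempty ∧ IsCompact (menusIR U ulow) := by
  obtain ⟨cstar, hcstar⟩ := hIR
  constructor
  · refine ⟨⟨{cstar}, singleton_nonempty _, isClosed_singleton⟩, fun θ => ?_⟩
    have : Ustar U θ ⟨{cstar}, singleton_nonempty _, isClosed_singleton⟩ = U (θ, cstar) := by
      simp [Ustar, Set.image_singleton]
    rw [this]
    exact hcstar θ
  · have : CompactSpace (CL C) := fell_compactSpace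
    have hclosed : IsClosed (menusIR U ulow) := by
      rw [← isOpen_compl_iff, isOpen_iff_forall_mem_open]
      intro D hD
      simp only [menusIR, mem_compl_iff, mem_setOf_eq, not_forall, not_le] at hD
      obtain ⟨θ, hθ⟩ := hD
      have hUc : Continuous fun c => U (θ, c) := hU.comp (Continuous.prodMk_right θ)
      set W := {c | U (θ, c) < ulow θ} with hWdef
      have hWopen : IsOpen W := isOpen_lt hUc continuous_const
      have hDW : D.1 ⊆ W := by
        intro d hd
        have hbdd : BddAbove ((fun d => U (θ, d)) '' D.1) :=
          ((D.2.2.isCompact.image hUc)).bddAbove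
        have : U (θ, d) ≤ Ustar U θ D := le_csSup hbdd ⟨d, hd, rfl⟩
        exact lt_of_le_of_lt this hθ
      obtain ⟨d₀, hd₀⟩ := D.2.1
      refine ⟨{B : CL C | B.1 ⊆ W}, ?_, ?_, hDW⟩
      · intro B hB
        simp only [menusIR, mem_compl_iff, mem_setOf_eq, not_forall, not_le]
        obtain ⟨b, hbB, hbmax⟩ := (B.2.2.isCompact).exists_sSup_image_eq B.2.1 hUc.continuousOn
        exact ⟨θ, by rw [Ustar, hbmax]; exact hB hbB⟩
      · exact TopologicalSpace.isOpen_generateFrom_of_mem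
          (Or.inr ⟨W, hWopen, ⟨d₀, hDW hd₀⟩, rfl⟩)
    exact hclosed.isCompact
end

section
/- Let (C, τ^C) be a compact Hausdorff space, Θ any nonempty set, and suppose U : Θ × C → ℝ is continuous in the second variable for each fixed θ, V : Θ × C → ℝ is upper semicontinuous in the second variable for each fixed θ, and there exists c* ∈ C with U(θ, c*) ≥ u̲(θ) for all θ ∈ Θ, where u̲ : Θ → ℝ. Then there exists D* ∈ T attaining the supremum sup_{D ∈ T} inf_{θ ∈ Θ} V*(θ, D), where T := {D ∈ CL(C) : sup_{d ∈ D} U(θ, d) ≥ u̲(θ) for all θ ∈ Θ} and V*(θ, D) := sup_{d ∈ Φ(θ, D)} V(θ, d) with Φ(θ, D) := argmax_{d ∈ D} U(θ, d). -/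
open Set Filter Topology TopologicalSpace

section Aux

/-- A function whose strict sublevel sets are open attains its maximum on a
nonempty compact closed set. -/
theorem usc_exists_max {X β : Type*} [TopologicalSpace X] [LinearOrder β] {f : X → β}
    {s : Set X} (hs : IsCompact s) (hsc : IsClosed s) (hne : s.Nonempty)
    (hf : ∀ b : β, IsOpen {x | f x < b}) :
    ∃ x ∈ s, ∀ y ∈ s, f y ≤ f x := by
  have hnes : Nonempty s := hne.to_subtype
  set t : s → Set X := fun y => s ∩ {x | f x < f y.1}ᶜ with ht
  have htcl : ∀ y, IsClosed (t y) := fun y => hsc.inter (hf _).isClosed_compl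
  have htc : ∀ y, IsCompact (t y) :=
    fun y => hs.of_isClosed_subset (htcl y) inter_subset_left
  have htn : ∀ y, (t y).Nonempty := fun y => ⟨y.1, y.2, by simp⟩
  have htd : Directed (· ⊇ ·) t := by
    intro a b
    rcases le_total (f a.1) (f b.1) with h | h
    · exact ⟨b, fun x hx => ⟨hx.1, fun hc => hx.2 (hc.trans_le h)⟩, fun x hx => hx⟩
    · exact ⟨a, fun x hx => hx, fun x hx => ⟨hx.1, fun hc => hx.2 (hc.trans_le h)⟩⟩
  obtain ⟨x, hx⟩ :=
    IsCompact.nonempty_iInter_of_directed_nonempty_isCompact_isClosed t htd htn htc htcl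
  simp only [Set.mem_iInter] at hx
  obtain ⟨y0⟩ := hnes
  refine ⟨x, (hx y0).1, fun y hy => ?_⟩
  have := (hx ⟨y, hy⟩).2
  simpa [not_lt] using this

variable {Θ C : Type*} [TopologicalSpace C]

theorem fell_isOpen_subsets {W : Set C} (hW : IsOpen W) (hne : W.Nonempty) :
    IsOpen {A : CL C | A.1 ⊆ W} :=
  isOpen_generateFrom_of_mem (Or.inr ⟨W, hW, hne, rfl⟩)

theorem fell_isOpen_hits {V : Set C} (hV : IsOpen V) (hne : V.Nonempty) :
    IsOpen {A : CL C | (A.1 ∩ V).Nonempty} :=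
  isOpen_generateFrom_of_mem (Or.inl ⟨V, hV, hne, rfl⟩)

/-- The hyperspace of a compact space is compact in the Fell topology. -/
instance CL.compactSpace [CompactSpace C] : CompactSpace (CL C) := by
  rw [← isCompact_univ_iff, isCompact_iff_ultrafilter_le_nhds]
  intro F _
  classical
  set A : Set C :=
    {x | ∀ Vo : Set C, IsOpen Vo → x ∈ Vo → {D : CL C | (D.1 ∩ Vo).Nonempty} ∈ F} with hA
  -- membership criterion for the complement of A
  have hAc : ∀ x : C, x ∉ A →
      ∃ Vo : Set C, IsOpen Vo ∧ x ∈ Vo ∧ {D : CL C | (D.1 ∩ Vo).Nonempty} ∉ F := by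
    intro x hx
    by_contra h
    push_neg at h
    exact hx fun Vo hVo hxVo => h Vo hVo hxVo
  have hAcl : IsClosed A := by
    rw [← isOpen_compl_iff, isOpen_iff_forall_mem_open]
    intro x hx
    obtain ⟨Vo, hVo, hxVo, hnot⟩ := hAc x hx
    refine ⟨Vo, fun y hy hyA => hnot (hyA Vo hVo hy), hVo, hxVo⟩
  -- index type of "bad" open sets
  let ι := {p : Set C // IsOpen p ∧ {D : CL C | (D.1 ∩ p).Nonempty} ∉ F}
  have hAne : A.Nonempty := by
    by_contra h
    rw [Set.not_nonempty_iff_eq_empty] at h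
    have hcov : (Set.univ : Set C) ⊆ ⋃ i : ι, i.1 := by
      intro x _
      have hx : x ∉ A := by simp [h]
      obtain ⟨Vo, hVo, hxVo, hnot⟩ := hAc x hx
      exact Set.mem_iUnion.2 ⟨⟨Vo, hVo, hnot⟩, hxVo⟩
    obtain ⟨t, ht⟩ := isCompact_univ.elim_finite_subcover (fun i : ι => i.1)
      (fun i => i.2.1) hcov
    have hS : (⋂ i ∈ t, {D : CL C | (D.1 ∩ i.1).Nonempty}ᶜ) ∈ F :=
      (Filter.biInter_finset_mem t).2 fun i _ => Ultrafilter.compl_mem_iff_notMem.2 i.2.2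
    obtain ⟨D, hD⟩ := Ultrafilter.nonempty_of_mem hS
    obtain ⟨d, hd⟩ := D.2.1
    have : d ∈ ⋃ i ∈ t, i.1 := ht (Set.mem_univ d)
    obtain ⟨i, hit, hdi⟩ := Set.mem_iUnion₂.1 this
    have := Set.mem_iInter₂.1 hD i hit
    exact this ⟨d, hd, hdi⟩
  refine ⟨⟨A, hAne, hAcl⟩, Set.mem_univ _, ?_⟩
  refine le_nhds_iff.2 ?_
  intro s hAs hs
  have hs' : TopologicalSpace.GenerateOpen (fellSubbasis C) s := hs
  clear hs
  induction hs' with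
  | basic u hu =>
    rcases hu with ⟨V, hV, _, rfl⟩ | ⟨W, hW, _, rfl⟩
    · obtain ⟨x, hxA, hxV⟩ := hAs
      exact hxA V hV hxV
    · -- A ⊆ W; cover K = Wᶜ by bad open sets
      have hK : IsCompact (Wᶜ : Set C) := hW.isClosed_compl.isCompact
      have hcov : (Wᶜ : Set C) ⊆ ⋃ i : ι, i.1 := by
        intro x hx
        have hxA : x ∉ A := fun hxA => hx (hAs hxA)
        obtain ⟨Vo, hVo, hxVo, hnot⟩ := hAc x hxA
        exact Set.mem_iUnion.2 ⟨⟨Vo, hVo, hnot⟩, hxVo⟩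
      obtain ⟨t, ht⟩ := hK.elim_finite_subcover (fun i : ι => i.1) (fun i => i.2.1) hcov
      have hS : (⋂ i ∈ t, {D : CL C | (D.1 ∩ i.1).Nonempty}ᶜ) ∈ F :=
        (Filter.biInter_finset_mem t).2 fun i _ => Ultrafilter.compl_mem_iff_notMem.2 i.2.2
      refine Filter.mem_of_superset hS ?_
      intro D hD d hd
      by_contra hdW
      have : d ∈ ⋃ i ∈ t, i.1 := ht hdW
      obtain ⟨i, hit, hdi⟩ := Set.mem_iUnion₂.1 this
      exact Set.mem_iInter₂.1 hD i hit ⟨d, hd, hdi⟩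
  | univ => exact Filter.univ_mem
  | inter u v _ _ ihu ihv => exact Filter.inter_mem (ihu hAs.1) (ihv hAs.2)
  | sUnion S _ ih =>
    obtain ⟨u, huS, hau⟩ := hAs
    exact Filter.mem_of_superset (ih u huS hau) (Set.subset_sUnion_of_mem huS)

variable [CompactSpace C] {U V : Θ × C → ℝ}

theorem ustar_isGreatest (hU : ∀ θ : Θ, Continuous fun c => U (θ, c)) (θ : Θ) (D : CL C) :
    IsGreatest ((fun d => U (θ, d)) '' D.1) (Ustar U θ D) := by
  have hcomp : IsCompact D.1 := D.2.2.isCompact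
  have himg : IsCompact ((fun d => U (θ, d)) '' D.1) := hcomp.image (hU θ)
  have hne : ((fun d => U (θ, d)) '' D.1).Nonempty := D.2.1.image _
  exact ⟨himg.sSup_mem hne, fun y hy => le_csSup himg.bddAbove hy⟩

theorem phi_nonempty (hU : ∀ θ : Θ, Continuous fun c => U (θ, c)) (θ : Θ) (D : CL C) :
    (Phi U θ D).Nonempty := by
  obtain ⟨d, hd, hEq⟩ := (ustar_isGreatest hU θ D).1
  exact ⟨d, hd, hEq⟩

theorem le_ustar (hU : ∀ θ : Θ, Continuous fun c => U (θ, c)) (θ : Θ) (D : CL C)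
    {d : C} (hd : d ∈ D.1) : U (θ, d) ≤ Ustar U θ D :=
  (ustar_isGreatest hU θ D).2 ⟨d, hd, rfl⟩

theorem phi_closed (hU : ∀ θ : Θ, Continuous fun c => U (θ, c)) (θ : Θ) (D : CL C) :
    IsClosed (Phi U θ D) := by
  have : Phi U θ D = D.1 ∩ (fun d => U (θ, d)) ⁻¹' {Ustar U θ D} := by
    ext d; simp [Phi]
  rw [this]
  exact D.2.2.inter (isClosed_singleton.preimage (hU θ))

theorem vstar_isGreatest (hU : ∀ θ : Θ, Continuous fun c => U (θ, c))
    (hV : ∀ θ : Θ, UpperSemicontinuous fun c => V (θ, c)) (θ : Θ) (D : CL C) :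
    IsGreatest ((fun d => V (θ, d)) '' Phi U θ D) (Vstar U V θ D) := by
  have hVopen : ∀ b : ℝ, IsOpen {x : C | V (θ, x) < b} := by
    intro b
    exact upperSemicontinuous_iff_isOpen_preimage.1 (hV θ) b
  have hcl : IsClosed (Phi U θ D) := phi_closed hU θ D
  obtain ⟨d, hd, hmax⟩ :=
    usc_exists_max hcl.isCompact hcl (phi_nonempty hU θ D) hVopen
  have hgr : IsGreatest ((fun d => V (θ, d)) '' Phi U θ D) (V (θ, d)) :=
    ⟨⟨d, hd, rfl⟩, by rintro y ⟨e, he, rfl⟩; exact hmax e he⟩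
  have : Vstar U V θ D = V (θ, d) := hgr.csSup_eq
  rw [this] at *
  exact hgr

theorem usc_ustar (hU : ∀ θ : Θ, Continuous fun c => U (θ, c)) (θ : Θ) (c : ℝ) :
    IsOpen {D : CL C | Ustar U θ D < c} := by
  rw [isOpen_iff_forall_mem_open]
  intro D0 hD0
  set m := Ustar U θ D0 with hm
  have hmc : m < c := hD0
  set W : Set C := (fun d => U (θ, d)) ⁻¹' Set.Iio ((m + c) / 2) with hW
  have hWopen : IsOpen W := (isOpen_Iio).preimage (hU θ)
  obtain ⟨d0, hd0⟩ := D0.2.1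
  have hD0W : D0.1 ⊆ W := by
    intro d hd
    have : U (θ, d) ≤ m := le_ustar hU θ D0 hd
    simp only [hW, Set.mem_preimage, Set.mem_Iio]
    linarith
  refine ⟨{A : CL C | A.1 ⊆ W}, ?_, fell_isOpen_subsets hWopen ⟨d0, hD0W hd0⟩, hD0W⟩
  intro A hA
  obtain ⟨d, hd, hEq⟩ := (ustar_isGreatest hU θ A).1
  have : U (θ, d) < (m + c) / 2 := hA hd
  have : Ustar U θ A < (m + c) / 2 := hEq ▸ this
  simp only [Set.mem_setOf_eq]
  linarith

theorem usc_vstar (hU : ∀ θ : Θ, Continuous fun c => U (θ, c))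
    (hV : ∀ θ : Θ, UpperSemicontinuous fun c => V (θ, c)) (θ : Θ) (c : ℝ) :
    IsOpen {D : CL C | Vstar U V θ D < c} := by
  have hVopen : ∀ b : ℝ, IsOpen {x : C | V (θ, x) < b} :=
    fun b => upperSemicontinuous_iff_isOpen_preimage.1 (hV θ) b
  rw [isOpen_iff_forall_mem_open]
  intro D0 hD0
  set m := Ustar U θ D0 with hm
  obtain ⟨d0, hd0D, hd0U⟩ := phi_nonempty hU θ D0
  have hPhiV : ∀ d ∈ Phi U θ D0, V (θ, d) < c := by
    intro d hd
    exact lt_of_le_of_lt ((vstar_isGreatest hU hV θ D0).2 ⟨d, hd, rfl⟩) hD0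
  set K : Set C := D0.1 ∩ {d | V (θ, d) < c}ᶜ with hK
  have hKcl : IsClosed K := D0.2.2.inter (hVopen c).isClosed_compl
  have hKU : ∀ d ∈ K, U (θ, d) < m := by
    rintro d ⟨hdD, hdV⟩
    rcases lt_or_eq_of_le (le_ustar hU θ D0 hdD) with h | h
    · exact h
    · exact absurd (hPhiV d ⟨hdD, h⟩) hdV
  obtain ⟨r, hrm, hKr⟩ : ∃ r : ℝ, r < m ∧ ∀ d ∈ K, U (θ, d) < r := by
    rcases K.eq_empty_or_nonempty with hKe | hKne
    · exact ⟨m - 1, by linarith, fun d hd => by simp [hKe] at hd⟩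
    · obtain ⟨dK, hdK, hdKmax⟩ :=
        usc_exists_max hKcl.isCompact hKcl hKne
          (fun b => (isOpen_Iio).preimage (hU θ) : ∀ b : ℝ, IsOpen {x | U (θ, x) < b})
      refine ⟨(U (θ, dK) + m) / 2, by have := hKU dK hdK; linarith, fun d hd => ?_⟩
      have h1 : U (θ, d) ≤ U (θ, dK) := hdKmax d hd
      have h2 : U (θ, dK) < m := hKU dK hdK
      linarith
  set Vo : Set C := (fun d => U (θ, d)) ⁻¹' Set.Ioi r with hVo
  have hVoopen : IsOpen Vo := (isOpen_Ioi).preimage (hU θ)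
  have hd0Vo : d0 ∈ Vo := by
    simp only [hVo, Set.mem_preimage, Set.mem_Ioi, hd0U]
    exact hrm
  set W : Set C := {d | V (θ, d) < c} ∪ (fun d => U (θ, d)) ⁻¹' Set.Iio r with hWdef
  have hWopen : IsOpen W := (hVopen c).union ((isOpen_Iio).preimage (hU θ))
  have hD0W : D0.1 ⊆ W := by
    intro d hd
    by_cases hdV : V (θ, d) < c
    · exact Or.inl hdV
    · exact Or.inr (hKr d ⟨hd, hdV⟩)
  refine ⟨{A : CL C | (A.1 ∩ Vo).Nonempty} ∩ {A : CL C | A.1 ⊆ W}, ?_,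
    (fell_isOpen_hits hVoopen ⟨d0, hd0Vo⟩).inter (fell_isOpen_subsets hWopen ⟨d0, hD0W hd0D⟩),
    ⟨⟨d0, hd0D, hd0Vo⟩, hD0W⟩⟩
  rintro A ⟨⟨p, hpA, hpVo⟩, hAW⟩
  have hUstarA : r < Ustar U θ A := lt_of_lt_of_le hpVo (le_ustar hU θ A hpA)
  have hPhiA : ∀ d ∈ Phi U θ A, V (θ, d) < c := by
    rintro d ⟨hdA, hdU⟩
    rcases hAW hdA with h | h
    · exact h
    · exact absurd (hdU ▸ h) (not_lt.2 hUstarA.le)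
  obtain ⟨d, hd, hEq⟩ := (vstar_isGreatest hU hV θ A).1
  show Vstar U V θ A < c
  rw [← hEq]
  exact hPhiA d hd

theorem menusIR_isClosed (hU : ∀ θ : Θ, Continuous fun c => U (θ, c)) (ulow : Θ → ℝ) :
    IsClosed (menusIR U ulow) := by
  have : menusIR U ulow = ⋂ θ : Θ, {D : CL C | Ustar U θ D < ulow θ}ᶜ := by
    ext D
    simp [menusIR, not_lt]
  rw [this]
  exact isClosed_iInter fun θ => (usc_ustar hU θ (ulow θ)).isClosed_compl

end Aux

/-- Existence of an optimal menu for a worst-case principal (Proposition 6 of the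
paper): if `C` is compact Hausdorff, `Θ` is a nonempty set, `U(θ, ·)` is continuous and
`V(θ, ·)` is upper semicontinuous for each fixed `θ`, and some contract is individually
rational, then the problem `sup_{D ∈ T} inf_{θ ∈ Θ} V*(θ, D)` (the infimum taken in the
extended reals) admits a maximizer `D* ∈ T`. -/
theorem exists_optimal_menu_worst_case {Θ C : Type*} [Nonempty Θ]
    [TopologicalSpace C] [CompactSpace C] [T2Space C]
    (U V : Θ × C → ℝ)
    (hU : ∀ θ : Θ, Continuous fun c => U (θ, c))
    (hV : ∀ θ : Θ, UpperSemicontinuous fun c => V (θ, c))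
    (ulow : Θ → ℝ) (hIR : ∃ cstar : C, ∀ θ : Θ, ulow θ ≤ U (θ, cstar)) :
    ∃ Dstar ∈ menusIR U ulow, ∀ D ∈ menusIR U ulow,
      (⨅ θ : Θ, ((Vstar U V θ D : ℝ) : EReal)) ≤
        ⨅ θ : Θ, ((Vstar U V θ Dstar : ℝ) : EReal) := by
  obtain ⟨cstar, hcst⟩ := hIR
  -- the singleton menu {cstar} is individually rational
  set D0 : CL C := ⟨{cstar}, Set.singleton_nonempty _, isClosed_singleton⟩ with hD0def
  have hD0 : D0 ∈ menusIR U ulow := by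
    intro θ
    have : Ustar U θ D0 = U (θ, cstar) := by
      show sSup ((fun d => U (θ, d)) '' {cstar}) = U (θ, cstar)
      rw [Set.image_singleton, csSup_singleton]
    rw [this]
    exact hcst θ
  -- the objective function is "upper semicontinuous" in the sublevel sense
  set g : CL C → EReal := fun D => ⨅ θ : Θ, ((Vstar U V θ D : ℝ) : EReal) with hg
  have hgopen : ∀ b : EReal, IsOpen {D : CL C | g D < b} := by
    intro b
    have hterm : ∀ θ : Θ, IsOpen {D : CL C | ((Vstar U V θ D : ℝ) : EReal) < b} := by
      intro θ
      induction b using EReal.rec with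
      | bot =>
        convert isOpen_empty using 1
        ext D
        simp only [Set.mem_setOf_eq, Set.mem_empty_iff_false, iff_false]
        exact not_lt_bot
      | coe c =>
        convert usc_vstar hU hV θ c using 1
        ext D
        simp [EReal.coe_lt_coe_iff]
      | top =>
        convert isOpen_univ using 1
        ext D
        simp [EReal.coe_lt_top]
    have : {D : CL C | g D < b} = ⋃ θ : Θ, {D : CL C | ((Vstar U V θ D : ℝ) : EReal) < b} := by
      ext D
      simp [hg, iInf_lt_iff]
    rw [this]
    exact isOpen_iUnion hterm
  have hTcl : IsClosed (menusIR U ulow) := menusIR_isClosed hU ulow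
  obtain ⟨Dstar, hmem, hmax⟩ :=
    usc_exists_max hTcl.isCompact hTcl ⟨D0, hD0⟩ hgopen
  exact ⟨Dstar, hmem, hmax⟩
end

section
/- Let X and Y be compact Hausdorff spaces, λ a regular Borel probability measure on X, and g : X × Y → ℝ jointly upper semicontinuous such that for each y ∈ Y the function x ↦ g(x, y) is λ-integrable. Then the function y ↦ ∫_X g(x, y) dλ(x) is upper semicontinuous on Y. -/
open MeasureTheory

/-- Upper semicontinuity of an integral functional (Lemma 7 of the paper): if `X` and
`Y` are compact Hausdorff spaces, `λ` is a regular Borel probability measure on `X` and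
`g : X × Y → ℝ` is jointly upper semicontinuous with `g(·, y)` `λ`-integrable for each
`y`, then `y ↦ ∫ g(x, y) dλ(x)` is upper semicontinuous on `Y`. -/
theorem upperSemicontinuous_integral {X Y : Type*}
    [TopologicalSpace X] [CompactSpace X] [T2Space X]
    [MeasurableSpace X] [BorelSpace X]
    [TopologicalSpace Y] [CompactSpace Y] [T2Space Y]
    (lam : Measure X) [IsProbabilityMeasure lam] [lam.InnerRegular] [lam.OuterRegular]
    (g : X × Y → ℝ) (hg : UpperSemicontinuous g)
    (hint : ∀ y : Y, Integrable (fun x => g (x, y)) lam) :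
    UpperSemicontinuous fun y : Y => ∫ x, g (x, y) ∂lam := by
  intro y₀ c hc
  set ε : ℝ := c - ∫ x, g (x, y₀) ∂lam with hε
  have εpos : 0 < ε := sub_pos.2 hc
  -- Vitali–Carathéodory: lsc EReal-valued φ > g(·,y₀) with close integral
  obtain ⟨φ, hφ_lt, hφ_lsc, hφ_int, hφ_top, hφ_close⟩ :=
    exists_lt_lowerSemicontinuous_integral_lt (μ := lam) (fun x => g (x, y₀)) (hint y₀) εpos
  -- The set where g < φ∘fst is open
  have husc : UpperSemicontinuous fun p : X × Y => (g p : EReal) :=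
    continuous_coe_real_ereal.comp_upperSemicontinuous hg
      (fun _ _ h => EReal.coe_le_coe_iff.2 h)
  set W : Set (X × Y) := {p | (g p : EReal) < φ p.1} with hW
  have hWopen : IsOpen W := by
    rw [isOpen_iff_mem_nhds]
    rintro ⟨x, y⟩ hxy
    have hxy' : (g (x, y) : EReal) < φ x := hxy
    obtain ⟨r, hr1, hr2⟩ := exists_between hxy'
    have h1 : ∀ᶠ p : X × Y in nhds (x, y), (g p : EReal) < r := husc (x, y) r hr1
    have h2 : ∀ᶠ x' : X in nhds x, r < φ x' := hφ_lsc x r hr2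
    have h2' : ∀ᶠ p : X × Y in nhds (x, y), r < φ p.1 :=
      (continuous_fst.continuousAt (x := (x, y))).eventually h2
    filter_upwards [h1, h2'] with p hp1 hp2 using lt_trans hp1 hp2
  -- X × {y₀} ⊆ W, so by the tube lemma there is an open V ∋ y₀ with X × V ⊆ W
  have hsub : Set.univ ×ˢ ({y₀} : Set Y) ⊆ W := by
    rintro ⟨x, y⟩ ⟨-, hy⟩
    simp only [Set.mem_singleton_iff] at hy
    subst hy
    exact hφ_lt x
  obtain ⟨u, v, hu, hv, hXu, hy₀v, huv⟩ :=
    generalized_tube_lemma isCompact_univ isCompact_singleton hWopen hsub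
  have hy₀v' : y₀ ∈ v := hy₀v rfl
  -- Conclude: for y ∈ v, ∫ g(·,y) ≤ ∫ toReal φ < ∫ g(·,y₀) + ε = c
  filter_upwards [hv.mem_nhds hy₀v'] with y hy
  have hle : ∫ x, g (x, y) ∂lam ≤ ∫ x, (φ x).toReal ∂lam := by
    refine integral_mono_ae (hint y) hφ_int ?_
    filter_upwards [hφ_top] with x hx
    have hxy : ((x, y) : X × Y) ∈ W := huv ⟨hXu (Set.mem_univ x), hy⟩
    have h1 : (g (x, y) : EReal) < φ x := hxy
    have h2 : ((g (x, y) : ℝ) : EReal) ≤ ((φ x).toReal : EReal) := by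
      rw [EReal.coe_toReal hx.ne (ne_bot_of_gt h1)]
      exact h1.le
    exact EReal.coe_le_coe_iff.1 h2
  calc ∫ x, g (x, y) ∂lam ≤ ∫ x, (φ x).toReal ∂lam := hle
    _ < ∫ x, g (x, y₀) ∂lam + ε := hφ_close
    _ = c := by rw [hε]; ring
end

section
/- Let X be a Hausdorff space, Y a compact Hausdorff space, λ a regular Borel probability measure on X, and g : X × Y → ℝ a jointly upper semicontinuous bounded function. Then the function y ↦ ∫_X g(x, y) dλ(x) is well-defined and upper semicontinuous on Y. -/
open MeasureTheory

private lemma upperSemicontinuous_integral_of_bounded.aux_div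
    (a b : ℝ) (hb : b ≠ 0) : a / (8 * b) * b = a / 8 := by
  field_simp

/-- Upper semicontinuity of an integral functional with non-compact first factor
(Corollary 8 of the paper): if `X` is Hausdorff, `Y` is compact Hausdorff, `λ` is a
regular Borel probability measure on `X` and `g : X × Y → ℝ` is jointly upper
semicontinuous and bounded, then `y ↦ ∫ g(x, y) dλ(x)` is well-defined (each `g(·, y)`
is `λ`-integrable) and upper semicontinuous on `Y`. -/
theorem upperSemicontinuous_integral_of_bounded {X Y : Type*}
    [TopologicalSpace X] [T2Space X]
    [MeasurableSpace X] [BorelSpace X]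
    [TopologicalSpace Y] [CompactSpace Y] [T2Space Y]
    (lam : Measure X) [IsProbabilityMeasure lam] [lam.InnerRegular] [lam.OuterRegular]
    (g : X × Y → ℝ) (hg : UpperSemicontinuous g)
    (hbdd : ∃ M : ℝ, ∀ p : X × Y, |g p| ≤ M) :
    (∀ y : Y, Integrable (fun x => g (x, y)) lam) ∧
      UpperSemicontinuous fun y : Y => ∫ x, g (x, y) ∂lam := by
  classical
  obtain ⟨M₀, hM₀⟩ := hbdd
  set M : ℝ := max M₀ 0 with hMdef
  have hMnn : 0 ≤ M := le_max_right _ _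
  have hgM : ∀ p : X × Y, |g p| ≤ M := fun p => (hM₀ p).trans (le_max_left _ _)
  have hgle : ∀ p : X × Y, g p ≤ M := fun p => (le_abs_self _).trans (hgM p)
  have hgge : ∀ p : X × Y, -M ≤ g p := fun p => neg_le_of_abs_le (hgM p)
  -- each slice is upper semicontinuous, hence measurable, hence integrable
  have husc : ∀ y : Y, UpperSemicontinuous fun x => g (x, y) := by
    intro y x c hc
    exact ((Continuous.prodMk_left y).tendsto x).eventually (hg (x, y) c hc)
  have hint : ∀ y : Y, Integrable (fun x => g (x, y)) lam := by
    intro y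
    exact Integrable.mono' (integrable_const M) ((husc y).measurable).aestronglyMeasurable
      (Filter.Eventually.of_forall fun x => by
        simpa [Real.norm_eq_abs] using hgM (x, y))
  refine ⟨hint, ?_⟩
  -- upper semicontinuity of the integral
  intro y₀ c hc
  set h : X → ℝ := fun x => g (x, y₀) with hhdef
  have hhint : Integrable h lam := hint y₀
  obtain ⟨E, hEdef⟩ : ∃ E : ℝ, E = c - ∫ x, h x ∂lam := ⟨_, rfl⟩
  have hEpos : 0 < E := hEdef ▸ sub_pos.2 hc
  obtain ⟨ε, hεpos, hεdef⟩ : ∃ ε : ℝ, 0 < ε ∧ ε = E / 4 :=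
    ⟨E / 4, by positivity, rfl⟩
  obtain ⟨n, hnε⟩ : ∃ n : ℕ, 2 * M ≤ (n : ℝ) * ε := by
    refine ⟨⌈2 * M / ε⌉₊, ?_⟩
    have h1 : 2 * M / ε ≤ (⌈2 * M / ε⌉₊ : ℝ) := Nat.le_ceil _
    have := mul_le_mul_of_nonneg_right h1 hεpos.le
    rwa [div_mul_cancel₀ _ hεpos.ne'] at this
  obtain ⟨δ, hδpos, hδval⟩ : ∃ δ : ℝ, 0 < δ ∧ ((n : ℝ) + 1) * δ * ε = E / 8 := by
    refine ⟨E / (8 * ε * ((n : ℝ) + 1)), by positivity, ?_⟩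
    have hn1 : ((n : ℝ) + 1) ≠ 0 := by positivity
    field_simp
  -- levels
  set t : ℕ → ℝ := fun k => -M + k * ε with htdef
  -- closed superlevel sets of h
  set A : ℕ → Set X := fun k => {x | t k ≤ h x} with hAdef
  have hAclosed : ∀ k, IsClosed (A k) := fun k => (husc y₀).isClosed_preimage (t k)
  have hAmeas : ∀ k, MeasurableSet (A k) := fun k => (hAclosed k).measurableSet
  -- open approximations from outside
  have hUex : ∀ k : ℕ, ∃ U : Set X,
      A k ⊆ U ∧ IsOpen U ∧ lam U < lam (A k) + ENNReal.ofReal δ := by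
    intro k
    obtain ⟨U, hAU, hUopen, hUlt⟩ := (A k).exists_isOpen_lt_of_lt
      (lam (A k) + ENNReal.ofReal δ)
      (ENNReal.lt_add_right (measure_ne_top lam _)
        (by simp [ENNReal.ofReal_eq_zero, not_le, hδpos]))
    exact ⟨U, hAU, hUopen, hUlt⟩
  choose U hAU hUopen hUlt using hUex
  -- a compact set carrying most of the mass
  obtain ⟨η, hηpos, hηval⟩ : ∃ η : ℝ, 0 < η ∧ η * (2 * M + 1) = E / 8 := by
    refine ⟨E / (8 * (2 * M + 1)), by positivity, ?_⟩
    exact upperSemicontinuous_integral_of_bounded.aux_div E (2 * M + 1) (by positivity)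
  obtain ⟨K, -, hKcomp, hKlt⟩ := MeasurableSet.univ.exists_isCompact_lt_add
    (μ := lam) (measure_ne_top lam _)
    (ε := ENNReal.ofReal η) (by simp [ENNReal.ofReal_eq_zero, not_le, hηpos])
  have hKmeas : MeasurableSet K := hKcomp.isClosed.measurableSet
  have hKc : lam Kᶜ ≤ ENNReal.ofReal η := by
    rw [measure_compl hKmeas (measure_ne_top lam _)]
    exact tsub_le_iff_right.2 (by rw [add_comm]; exact hKlt.le)
  have hκ : (lam Kᶜ).toReal ≤ η :=
    ENNReal.toReal_le_of_le_ofReal hηpos.le hKc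
  -- tube lemma: neighborhoods of y₀ controlling g on K \ U k
  have hVex : ∀ k : ℕ, ∃ V : Set Y, IsOpen V ∧ y₀ ∈ V ∧
      ∀ x ∈ K \ U k, ∀ y ∈ V, g (x, y) < t k := by
    intro k
    have hKU : IsCompact (K \ U k) := hKcomp.diff (hUopen k)
    have hopen : IsOpen {p : X × Y | g p < t k} := hg.isOpen_preimage (t k)
    have hsub : (K \ U k) ×ˢ ({y₀} : Set Y) ⊆ {p : X × Y | g p < t k} := by
      rintro ⟨x, y⟩ ⟨hx, hy⟩
      have hyy : y = y₀ := hy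
      subst hyy
      have hxA : x ∉ A k := fun hxA => hx.2 (hAU k hxA)
      have : ¬ t k ≤ h x := hxA
      exact lt_of_not_ge this
    obtain ⟨u, v, _, hvopen, hKu, hyv, huv⟩ :=
      generalized_tube_lemma hKU isCompact_singleton hopen hsub
    exact ⟨v, hvopen, hyv rfl, fun x hx y hy => huv ⟨hKu hx, hy⟩⟩
  choose V hVopen hyV hVlt using hVex
  -- the claimed eventual bound
  have hev : ∀ᶠ y in nhds y₀, ∀ k ∈ Finset.range (n + 1), y ∈ V k :=
    (Filter.eventually_all_finset _).2 fun k _ => (hVopen k).mem_nhds (hyV k)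
  filter_upwards [hev] with y hy
  -- integrability of the auxiliary functions
  have hind : ∀ (s : Set X), MeasurableSet s → ∀ a : ℝ,
      Integrable (s.indicator fun _ => a) lam := fun s hs a =>
    (integrable_const a).indicator hs
  have hindnn : ∀ (s : Set X) (x : X), (0:ℝ) ≤ ε → (0:ℝ) ≤ s.indicator (fun _ => ε) x :=
    fun s x hε => Set.indicator_nonneg (fun _ _ => hε) x
  -- upper comparison function ψ
  set ψ : X → ℝ := fun x => (-M + ε) +
      (∑ k ∈ Finset.range (n + 1), (U k).indicator (fun _ => ε) x) +
      Kᶜ.indicator (fun _ => 2 * M) x with hψdef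
  have hψint : Integrable ψ lam := by
    refine Integrable.add (Integrable.add (integrable_const _) ?_) ?_
    · exact integrable_finset_sum _ fun k _ => hind _ (hUopen k).measurableSet _
    · exact hind _ hKmeas.compl _
  -- pointwise bound g (x, y) ≤ ψ x
  have hpt : ∀ x, g (x, y) ≤ ψ x := by
    intro x
    have hsumnn : 0 ≤ ∑ k ∈ Finset.range (n + 1), (U k).indicator (fun _ => ε) x :=
      Finset.sum_nonneg fun k _ => hindnn _ _ hεpos.le
    have hKindnn : 0 ≤ Kᶜ.indicator (fun _ => 2 * M) x :=
      Set.indicator_nonneg (fun _ _ => by linarith) x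
    by_cases hxK : x ∈ K
    · by_cases hex : ∃ k, k ≤ n ∧ x ∉ U k
      · set j : ℕ := Nat.find hex with hjdef
        obtain ⟨hjn, hjU⟩ : j ≤ n ∧ x ∉ U j := Nat.find_spec hex
        have hmem : ∀ m, m < j → x ∈ U m := by
          intro m hm
          by_contra hmU
          exact Nat.find_min hex hm ⟨by omega, hmU⟩
        have hgy : g (x, y) < t j :=
          hVlt j x ⟨hxK, hjU⟩ y (hy j (Finset.mem_range.2 (Nat.lt_succ_of_le hjn)))
        have hsumge : (j : ℝ) * ε ≤
            ∑ k ∈ Finset.range (n + 1), (U k).indicator (fun _ => ε) x := by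
          have h1 : ∑ k ∈ Finset.range j, (U k).indicator (fun _ => ε) x
              = (j : ℝ) * ε := by
            rw [Finset.sum_congr rfl fun k hk =>
              Set.indicator_of_mem (hmem k (Finset.mem_range.1 hk)) _]
            simp [mul_comm]
          calc (j : ℝ) * ε
              = ∑ k ∈ Finset.range j, (U k).indicator (fun _ => ε) x := h1.symm
            _ ≤ ∑ k ∈ Finset.range (n + 1), (U k).indicator (fun _ => ε) x :=
              Finset.sum_le_sum_of_subset_of_nonneg
                (Finset.range_subset_range.2 (by omega))
                (fun k _ _ => hindnn _ _ hεpos.le)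
        have : t j = -M + (j : ℝ) * ε := rfl
        simp only [hψdef]
        nlinarith [hgy, hsumge, hKindnn]
      · push_neg at hex
        have hall : ∀ k ∈ Finset.range (n + 1), (U k).indicator (fun _ => ε) x = ε := by
          intro k hk
          exact Set.indicator_of_mem (hex k (Nat.lt_succ_iff.1 (Finset.mem_range.1 hk))) _
        have hsumeq : ∑ k ∈ Finset.range (n + 1), (U k).indicator (fun _ => ε) x
            = ((n : ℝ) + 1) * ε := by
          rw [Finset.sum_congr rfl hall]
          simp [mul_comm]
        have hgub : g (x, y) ≤ M := hgle _
        simp only [hψdef]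
        rw [hsumeq]
        nlinarith [hKindnn, hnε, hεpos]
    · have hxKc : x ∈ Kᶜ := hxK
      have hKind : Kᶜ.indicator (fun _ => 2 * M) x = 2 * M :=
        Set.indicator_of_mem hxKc _
      have hgub : g (x, y) ≤ M := hgle _
      simp only [hψdef]
      rw [hKind]
      nlinarith [hsumnn, hεpos]
  -- value of ∫ ψ
  have hSint : Integrable
      (fun x => ∑ k ∈ Finset.range (n + 1), (U k).indicator (fun _ => ε) x) lam :=
    integrable_finset_sum _ fun k _ => hind _ (hUopen k).measurableSet _
  have hcSint : Integrable
      (fun x => (-M + ε) +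
        ∑ k ∈ Finset.range (n + 1), (U k).indicator (fun _ => ε) x) lam :=
    (integrable_const _).add hSint
  have hψval : ∫ x, ψ x ∂lam = (-M + ε) +
      (∑ k ∈ Finset.range (n + 1), (lam (U k)).toReal * ε) +
      (lam Kᶜ).toReal * (2 * M) := by
    have e1 : ∫ x, ψ x ∂lam
        = (∫ x, ((-M + ε) +
            ∑ k ∈ Finset.range (n + 1), (U k).indicator (fun _ => ε) x) ∂lam)
          + ∫ x, Kᶜ.indicator (fun _ => 2 * M) x ∂lam :=
      integral_add hcSint (hind _ hKmeas.compl _)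
    have e2 : ∫ x, ((-M + ε) +
            ∑ k ∈ Finset.range (n + 1), (U k).indicator (fun _ => ε) x) ∂lam
        = (∫ _x, (-M + ε) ∂lam)
          + ∫ x, (∑ k ∈ Finset.range (n + 1), (U k).indicator (fun _ => ε) x) ∂lam :=
      integral_add (integrable_const _) hSint
    have e3 : ∫ x, (∑ k ∈ Finset.range (n + 1), (U k).indicator (fun _ => ε) x) ∂lam
        = ∑ k ∈ Finset.range (n + 1), ∫ x, (U k).indicator (fun _ => ε) x ∂lam :=
      integral_finset_sum _ fun k _ => hind _ (hUopen k).measurableSet _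
    have e4 : ∀ k ∈ Finset.range (n + 1),
        ∫ x, (U k).indicator (fun _ => ε) x ∂lam = (lam (U k)).toReal * ε := by
      intro k _
      rw [integral_indicator_const ε (hUopen k).measurableSet, smul_eq_mul]
      rfl
    have e5 : ∫ x, Kᶜ.indicator (fun _ => 2 * M) x ∂lam = (lam Kᶜ).toReal * (2 * M) := by
      rw [integral_indicator_const (2 * M) hKmeas.compl, smul_eq_mul]
      rfl
    have e6 : ∫ _x : X, (-M + ε) ∂lam = -M + ε := by simp
    rw [e1, e2, e3, Finset.sum_congr rfl e4, e5, e6]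
  -- lower comparison function φ for h
  set φ : X → ℝ := fun x => (-M - ε) +
      ∑ k ∈ Finset.range (n + 1), (A k).indicator (fun _ => ε) x with hφdef
  have hφint : Integrable φ lam :=
    Integrable.add (integrable_const _)
      (integrable_finset_sum _ fun k _ => hind _ (hAmeas k) _)
  have hφle : ∀ x, φ x ≤ h x := by
    intro x
    have hhM : -M ≤ h x := hgge (x, y₀)
    have hnn : 0 ≤ h x + M := by linarith
    set j : ℕ := ⌊(h x + M) / ε⌋₊ with hjdef
    have hjle : (j : ℝ) * ε ≤ h x + M := by
      have := Nat.floor_le (by positivity : 0 ≤ (h x + M) / ε)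
      calc (j : ℝ) * ε ≤ ((h x + M) / ε) * ε := by
            exact mul_le_mul_of_nonneg_right this hεpos.le
        _ = h x + M := div_mul_cancel₀ _ hεpos.ne'
    have hkj : ∀ k : ℕ, x ∈ A k → k ≤ j := by
      intro k hk
      have hk' : t k ≤ h x := hk
      have : (k : ℝ) * ε ≤ h x + M := by
        have : -M + (k : ℝ) * ε ≤ h x := hk'
        linarith
      refine Nat.le_floor ?_
      rw [le_div_iff₀ hεpos]
      exact this
    have hsum : ∑ k ∈ Finset.range (n + 1), (A k).indicator (fun _ => ε) x
        ≤ ((j : ℝ) + 1) * ε := by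
      have h1 : ∀ k ∈ Finset.range (n + 1),
          (A k).indicator (fun _ => ε) x ≤ if k ≤ j then ε else 0 := by
        intro k _
        by_cases hxA : x ∈ A k
        · rw [Set.indicator_of_mem hxA, if_pos (hkj k hxA)]
        · rw [Set.indicator_of_notMem hxA]
          split
          · exact hεpos.le
          · exact le_rfl
      calc ∑ k ∈ Finset.range (n + 1), (A k).indicator (fun _ => ε) x
          ≤ ∑ k ∈ Finset.range (n + 1), if k ≤ j then ε else 0 :=
            Finset.sum_le_sum h1
        _ = ∑ k ∈ (Finset.range (n + 1)).filter (fun k => k ≤ j), ε :=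
            (Finset.sum_filter _ _).symm
        _ = ((Finset.range (n + 1)).filter (fun k => k ≤ j)).card • ε :=
            (Finset.sum_const _)
        _ ≤ (j + 1) • ε := by
            refine nsmul_le_nsmul_left hεpos.le ?_
            have : (Finset.range (n + 1)).filter (fun k => k ≤ j)
                ⊆ Finset.range (j + 1) := by
              intro k hk
              simp only [Finset.mem_filter] at hk
              exact Finset.mem_range.2 (Nat.lt_succ_of_le hk.2)
            simpa using Finset.card_le_card this
        _ = ((j : ℝ) + 1) * ε := by
            rw [nsmul_eq_mul]
            push_cast
            ring
    simp only [hφdef]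
    linarith
  have hφval : ∫ x, φ x ∂lam = (-M - ε) +
      ∑ k ∈ Finset.range (n + 1), (lam (A k)).toReal * ε := by
    have hSAint : Integrable
        (fun x => ∑ k ∈ Finset.range (n + 1), (A k).indicator (fun _ => ε) x) lam :=
      integrable_finset_sum _ fun k _ => hind _ (hAmeas k) _
    have e1 : ∫ x, φ x ∂lam
        = (∫ _x, (-M - ε) ∂lam)
          + ∫ x, (∑ k ∈ Finset.range (n + 1), (A k).indicator (fun _ => ε) x) ∂lam :=
      integral_add (integrable_const _) hSAint
    have e2 : ∫ x, (∑ k ∈ Finset.range (n + 1), (A k).indicator (fun _ => ε) x) ∂lam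
        = ∑ k ∈ Finset.range (n + 1), ∫ x, (A k).indicator (fun _ => ε) x ∂lam :=
      integral_finset_sum _ fun k _ => hind _ (hAmeas k) _
    have e3 : ∀ k ∈ Finset.range (n + 1),
        ∫ x, (A k).indicator (fun _ => ε) x ∂lam = (lam (A k)).toReal * ε := by
      intro k _
      rw [integral_indicator_const ε (hAmeas k), smul_eq_mul]
      rfl
    have e4 : ∫ _x : X, (-M - ε) ∂lam = -M - ε := by simp
    rw [e1, e2, Finset.sum_congr rfl e3, e4]
  have hφh : ∫ x, φ x ∂lam ≤ ∫ x, h x ∂lam :=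
    integral_mono hφint hhint hφle
  -- measure comparison: lam (U k) ≤ lam (A k) + δ in real terms
  have hUA : ∀ k ∈ Finset.range (n + 1),
      (lam (U k)).toReal * ε ≤ ((lam (A k)).toReal + δ) * ε := by
    intro k _
    have h1 : (lam (U k)).toReal ≤ (lam (A k)).toReal + δ := by
      have h2 : (lam (U k)).toReal ≤ (lam (A k) + ENNReal.ofReal δ).toReal :=
        ENNReal.toReal_mono
          (by simp [ENNReal.add_ne_top, measure_ne_top]) (hUlt k).le
      rwa [ENNReal.toReal_add (measure_ne_top lam _) ENNReal.ofReal_ne_top,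
        ENNReal.toReal_ofReal hδpos.le] at h2
    exact mul_le_mul_of_nonneg_right h1 hεpos.le
  -- put everything together
  have hSU : ∑ k ∈ Finset.range (n + 1), (lam (U k)).toReal * ε
      ≤ (∑ k ∈ Finset.range (n + 1), (lam (A k)).toReal * ε) + ((n : ℝ) + 1) * δ * ε := by
    calc ∑ k ∈ Finset.range (n + 1), (lam (U k)).toReal * ε
        ≤ ∑ k ∈ Finset.range (n + 1), ((lam (A k)).toReal + δ) * ε :=
          Finset.sum_le_sum hUA
      _ = (∑ k ∈ Finset.range (n + 1), (lam (A k)).toReal * ε) + ((n : ℝ) + 1) * δ * ε := by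
          simp only [add_mul]
          rw [Finset.sum_add_distrib, Finset.sum_const, Finset.card_range, nsmul_eq_mul]
          push_cast
          ring
  have hSA : ∑ k ∈ Finset.range (n + 1), (lam (A k)).toReal * ε
      ≤ (∫ x, h x ∂lam) + M + ε := by
    have := hφh
    rw [hφval] at this
    linarith
  have hgψ : ∫ x, g (x, y) ∂lam ≤ ∫ x, ψ x ∂lam :=
    integral_mono (hint y) hψint hpt
  have hκnn : 0 ≤ (lam Kᶜ).toReal := ENNReal.toReal_nonneg
  have hKterm : (lam Kᶜ).toReal * (2 * M) ≤ E / 8 := by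
    have h1 : (lam Kᶜ).toReal * (2 * M) ≤ η * (2 * M + 1) := by
      nlinarith
    linarith [hηval]
  have hfinal : ∫ x, g (x, y) ∂lam ≤ (∫ x, h x ∂lam) + E / 2 + E / 8 + E / 8 := by
    have := hgψ
    rw [hψval] at this
    linarith [hSU, hSA, hδval, hKterm]
  have : (∫ x, h x ∂lam) + E = c := by rw [hEdef]; ring
  linarith
end

section
/- Let (Ω, F, Q) be a probability space, 𝒳 ⊆ L⁰(Q) convex, closed under convergence in Q-probability, and such that for every λ ∈ ℝ the set {x ∈ 𝒳 : x ≥ λ a.s.} is bounded in Q-probability, and let e_a ∈ L^∞(Q). Then the set 𝒳(e_a) := {x ∈ L⁰(Q) : 0 ≤ x ≤ e_a + x̄ a.s. for some x̄ ∈ 𝒳} is convex, solid (if x ∈ 𝒳(e_a) and 0 ≤ y ≤ x a.s. then y ∈ 𝒳(e_a)), and closed under convergence in Q-probability: if x_n ∈ 𝒳(e_a) and x_n → x in Q-probability, then x ∈ 𝒳(e_a). -/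
open MeasureTheory Filter

/-- A set `A` of random variables is bounded in `Q`-probability if
`lim_{R → ∞} sup_{x ∈ A} Q(|x| ≥ R) = 0`. -/
def BddInProb {Ω : Type*} [MeasurableSpace Ω] (Q : Measure Ω)
    (A : Set (Ω → ℝ)) : Prop :=
  Tendsto (fun R : ℝ => ⨆ x ∈ A, Q {ω | R ≤ |x ω|}) atTop (nhds 0)

/-- The set `𝒳(e) = {x ∈ L⁰(Q) : 0 ≤ x ≤ e + x̄ a.s. for some x̄ ∈ 𝒳}` of feasible
risk transfers. -/
def XSet {Ω : Type*} [MeasurableSpace Ω] (Q : Measure Ω)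
    (𝒳 : Set (Ω → ℝ)) (e : Ω → ℝ) : Set (Ω → ℝ) :=
  {x | AEMeasurable x Q ∧ ∃ xb ∈ 𝒳, ∀ᵐ ω ∂Q, 0 ≤ x ω ∧ x ω ≤ e ω + xb ω}

/-- A Komlós-type convex compactness lemma: if `𝒳` is convex, closed under convergence
in probability, consists of a.e.-measurable functions, and its part above `-C` is bounded
in probability, then from any sequence `b` in `𝒳` uniformly bounded below by `-C`
one can produce an element `g ∈ 𝒳` dominating every function that is a.e. below
all tails of `b`. -/
lemma komlos {Ω : Type*} [MeasurableSpace Ω]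
    (Q : Measure Ω) [IsProbabilityMeasure Q]
    (𝒳 : Set (Ω → ℝ)) (h𝒳meas : ∀ x ∈ 𝒳, AEMeasurable x Q)
    (h𝒳conv : Convex ℝ 𝒳)
    (h𝒳closed : ∀ (f : ℕ → Ω → ℝ) (x : Ω → ℝ), (∀ n, f n ∈ 𝒳) →
      TendstoInMeasure Q f atTop x → x ∈ 𝒳)
    (C : ℝ)
    (hbddA : BddInProb Q {x ∈ 𝒳 | ∀ᵐ ω ∂Q, (-C) ≤ x ω})
    (b : ℕ → Ω → ℝ) (hb𝒳 : ∀ k, b k ∈ 𝒳) (hbC : ∀ k, ∀ᵐ ω ∂Q, -C ≤ b k ω)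
    (ψ : ℕ → Ω → ℝ) (hψ : ∀ n k, n ≤ k → ∀ᵐ ω ∂Q, ψ n ω ≤ b k ω) :
    ∃ g ∈ 𝒳, ∀ᵐ ω ∂Q, ∀ n, ψ n ω ≤ g ω := by
  classical
  set A : Set (Ω → ℝ) := {x ∈ 𝒳 | ∀ᵐ ω ∂Q, (-C) ≤ x ω} with hAdef
  -- utility functions
  set Wf : ℝ → ℝ := fun t => Real.exp (-(max (t + C) 0) / 2) with hWdef
  set v : ℝ → ℝ := fun t => 1 - Real.exp (-(max (t + C) 0)) with hvdef
  have hWcont : Continuous Wf := by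
    apply Real.continuous_exp.comp
    fun_prop
  have hvcont : Continuous v := by
    apply continuous_const.sub
    apply Real.continuous_exp.comp
    fun_prop
  have hv0 : ∀ t, 0 ≤ v t := by
    intro t
    have h1 : -(max (t + C) 0) ≤ 0 := neg_nonpos.mpr (le_max_right _ _)
    have := Real.exp_le_exp.mpr h1
    simp only [hvdef, Real.exp_zero] at this ⊢
    linarith
  have hv1 : ∀ t, v t ≤ 1 := by
    intro t
    have := Real.exp_pos (-(max (t + C) 0))
    simp only [hvdef]
    linarith
  -- key strict concavity identity
  have hkey : ∀ a c : ℝ, -C ≤ a → -C ≤ c →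
      (Wf a - Wf c) ^ 2 = 2 * (v ((a + c) / 2) - (v a + v c) / 2) := by
    intro a c ha hc
    have ha' : (0:ℝ) ≤ a + C := by linarith
    have hc' : (0:ℝ) ≤ c + C := by linarith
    have hm : (0:ℝ) ≤ (a + c) / 2 + C := by linarith
    simp only [hWdef, hvdef, max_eq_left ha', max_eq_left hc', max_eq_left hm]
    have e1 : Real.exp (-(a + C)) = Real.exp (-(a + C) / 2) * Real.exp (-(a + C) / 2) := by
      rw [← Real.exp_add]; ring_nf
    have e2 : Real.exp (-(c + C)) = Real.exp (-(c + C) / 2) * Real.exp (-(c + C) / 2) := by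
      rw [← Real.exp_add]; ring_nf
    have e3 : Real.exp (-((a + c) / 2 + C)) =
        Real.exp (-(a + C) / 2) * Real.exp (-(c + C) / 2) := by
      rw [← Real.exp_add]; ring_nf
    rw [e1, e2, e3]; ring
  -- the integral functional
  set J : (Ω → ℝ) → ℝ := fun h => ∫ ω, v (h ω) ∂Q with hJdef
  have hint : ∀ h : Ω → ℝ, AEMeasurable h Q → Integrable (fun ω => v (h ω)) Q := by
    intro h hh
    refine Integrable.mono' (integrable_const 1)
      (hvcont.measurable.comp_aemeasurable hh).aestronglyMeasurable ?_
    refine Eventually.of_forall fun ω => ?_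
    rw [Real.norm_eq_abs, abs_le]
    exact ⟨by linarith [hv0 (h ω)], hv1 (h ω)⟩
  have hJ0 : ∀ h : Ω → ℝ, AEMeasurable h Q → 0 ≤ J h := by
    intro h hh
    exact integral_nonneg fun ω => hv0 (h ω)
  have hJ1 : ∀ h : Ω → ℝ, AEMeasurable h Q → J h ≤ 1 := by
    intro h hh
    have := integral_mono (hint h hh) (integrable_const 1) fun ω => hv1 (h ω)
    simpa using this
  -- convex sets
  set T : ℕ → Set (Ω → ℝ) := fun n =>
    {h | h ∈ 𝒳 ∧ ∀ᵐ ω ∂Q, -C ≤ h ω ∧ ∀ i ≤ n, ψ i ω ≤ h ω} with hTdef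
  have hTconv : ∀ n, Convex ℝ (T n) := by
    intro n x hx y hy a c ha hc hac
    refine ⟨h𝒳conv hx.1 hy.1 ha hc hac, ?_⟩
    filter_upwards [hx.2, hy.2] with ω h1 h2
    have happ : (a • x + c • y) ω = a * x ω + c * y ω := by
      simp [Pi.add_apply, Pi.smul_apply, smul_eq_mul]
    constructor
    · have g1 : a * (-C) ≤ a * x ω := mul_le_mul_of_nonneg_left h1.1 ha
      have g2 : c * (-C) ≤ c * y ω := mul_le_mul_of_nonneg_left h2.1 hc
      have g3 : a * (-C) + c * (-C) = -C := by rw [← add_mul, hac]; ring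
      rw [happ]; linarith
    · intro i hi
      have g1 : a * ψ i ω ≤ a * x ω := mul_le_mul_of_nonneg_left (h1.2 i hi) ha
      have g2 : c * ψ i ω ≤ c * y ω := mul_le_mul_of_nonneg_left (h2.2 i hi) hc
      have g3 : a * ψ i ω + c * ψ i ω = ψ i ω := by rw [← add_mul, hac]; ring
      rw [happ]; linarith
  set Cn : ℕ → Set (Ω → ℝ) := fun n => convexHull ℝ (b '' Set.Ici n) with hCndef
  have hCnT : ∀ n, Cn n ⊆ T n := by
    intro n
    refine convexHull_min ?_ (hTconv n)
    rintro _ ⟨k, hk, rfl⟩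
    refine ⟨hb𝒳 k, ?_⟩
    have hpsi : ∀ᵐ ω ∂Q, ∀ i, i ≤ n → ψ i ω ≤ b k ω := by
      rw [ae_all_iff]
      intro i
      by_cases hi : i ≤ n
      · exact (hψ i k (hi.trans hk)).mono fun ω h' _ => h'
      · exact Eventually.of_forall fun ω h' => absurd h' hi
    filter_upwards [hbC k, hpsi] with ω h1 h2
    exact ⟨h1, h2⟩
  have hCn_anti : ∀ n m, n ≤ m → Cn m ⊆ Cn n := by
    intro n m hnm
    exact convexHull_mono (Set.image_mono (Set.Ici_subset_Ici.mpr hnm))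
  have hCne : ∀ n, b n ∈ Cn n :=
    fun n => subset_convexHull ℝ _ ⟨n, le_refl n, rfl⟩
  have hCnmeas : ∀ n, ∀ h ∈ Cn n, AEMeasurable h Q :=
    fun n h hh => h𝒳meas h (hCnT n hh).1
  -- the suprema
  have hbddJ : ∀ n, BddAbove (J '' Cn n) := by
    intro n
    refine ⟨1, ?_⟩
    rintro _ ⟨h, hh, rfl⟩
    exact hJ1 h (hCnmeas n h hh)
  have hneJ : ∀ n, (J '' Cn n).Nonempty := fun n => ⟨J (b n), ⟨b n, hCne n, rfl⟩⟩
  set s : ℕ → ℝ := fun n => sSup (J '' Cn n) with hsdef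
  have hs_anti : Antitone s := fun n m hnm =>
    csSup_le_csSup (hbddJ n) (hneJ m) (Set.image_mono (f := J) (hCn_anti n m hnm))
  have hs0 : ∀ n, 0 ≤ s n := fun n =>
    le_trans (hJ0 (b n) (h𝒳meas _ (hb𝒳 n))) (le_csSup (hbddJ n) ⟨b n, hCne n, rfl⟩)
  have hbb : BddBelow (Set.range s) := ⟨0, by rintro _ ⟨n, rfl⟩; exact hs0 n⟩
  set sL : ℝ := ⨅ n, s n with hsLdef
  have hsL_le : ∀ n, sL ≤ s n := fun n => ciInf_le hbb n
  have hs_tendsto : Tendsto s atTop (nhds sL) := tendsto_atTop_ciInf hs_anti hbb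
  -- choose near-optimizers
  have hgex : ∀ n, ∃ h, h ∈ Cn n ∧ s n - 1 / (n + 1) < J h := by
    intro n
    have h1 : s n - 1 / (n + 1 : ℝ) < s n := by
      have : (0:ℝ) < 1 / (n + 1 : ℝ) := by positivity
      linarith
    obtain ⟨r, ⟨h, hh, rfl⟩, hr⟩ := exists_lt_of_lt_csSup (hneJ n) h1
    exact ⟨h, hh, hr⟩
  choose g hgC hgJ using hgex
  have hgT : ∀ n, g n ∈ T n := fun n => hCnT n (hgC n)
  have hg𝒳 : ∀ n, g n ∈ 𝒳 := fun n => (hgT n).1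
  have hgmeas : ∀ n, AEMeasurable (g n) Q := fun n => h𝒳meas _ (hg𝒳 n)
  have hgae : ∀ n, ∀ᵐ ω ∂Q, -C ≤ g n ω ∧ ∀ i ≤ n, ψ i ω ≤ g n ω := fun n => (hgT n).2
  have hgA : ∀ n, g n ∈ A := fun n => ⟨hg𝒳 n, (hgae n).mono fun ω h => h.1⟩
  -- the L² bound
  set w : ℕ → Ω → ℝ := fun n ω => Wf (g n ω) with hwdef
  set δ : ℕ → ℝ := fun n => 2 * (s n - sL) + 2 / (n + 1) with hδdef
  have hδ_anti : Antitone δ := by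
    intro n m hnm
    have h1 : s m ≤ s n := hs_anti hnm
    have h2 : 1 / (m + 1 : ℝ) ≤ 1 / (n + 1 : ℝ) := by
      apply one_div_le_one_div_of_le (by positivity)
      exact_mod_cast by omega
    simp only [hδdef]
    rw [div_eq_mul_one_div (2:ℝ), div_eq_mul_one_div (2:ℝ) ((n:ℝ)+1)]
    nlinarith
  have hδ0 : ∀ n, 0 ≤ δ n := by
    intro n
    have := hsL_le n
    have : (0:ℝ) ≤ 2 / (n + 1 : ℝ) := by positivity
    simp only [hδdef]
    nlinarith [hsL_le n]
  have hkeyint : ∀ n m, n ≤ m → ∫ ω, (w n ω - w m ω) ^ 2 ∂Q ≤ δ n := by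
    intro n m hnm
    set mid : Ω → ℝ := (1/2 : ℝ) • g n + (1/2 : ℝ) • g m with hmiddef
    have hmidC : mid ∈ Cn n := by
      have h2 : g m ∈ Cn n := hCn_anti n m hnm (hgC m)
      exact (convex_convexHull ℝ _) (hgC n) h2 (by norm_num) (by norm_num) (by norm_num)
    have hmidmeas : AEMeasurable mid Q := hCnmeas n mid hmidC
    have hJmid : J mid ≤ s n := le_csSup (hbddJ n) ⟨mid, hmidC, rfl⟩
    have hint1 := hint _ (hgmeas n)
    have hint2 := hint _ (hgmeas m)
    have hintm := hint _ hmidmeas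
    have heqae : (fun ω => (w n ω - w m ω) ^ 2)
        =ᵐ[Q] fun ω => 2 * v (mid ω) - v (g n ω) - v (g m ω) := by
      filter_upwards [hgae n, hgae m] with ω h1 h2
      have hk := hkey (g n ω) (g m ω) h1.1 h2.1
      have hmideq : mid ω = (g n ω + g m ω) / 2 := by
        simp only [hmiddef, Pi.add_apply, Pi.smul_apply, smul_eq_mul]; ring
      rw [hmideq]; rw [hk]; ring
    have e1 : ∫ ω, (2 * v (mid ω) - v (g n ω) - v (g m ω)) ∂Q
        = (∫ ω, (2 * v (mid ω) - v (g n ω)) ∂Q) - ∫ ω, v (g m ω) ∂Q :=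
      integral_sub ((hintm.const_mul 2).sub hint1) hint2
    have e2 : ∫ ω, (2 * v (mid ω) - v (g n ω)) ∂Q
        = (∫ ω, 2 * v (mid ω) ∂Q) - ∫ ω, v (g n ω) ∂Q :=
      integral_sub (hintm.const_mul 2) hint1
    have e3 : ∫ ω, 2 * v (mid ω) ∂Q = 2 * ∫ ω, v (mid ω) ∂Q :=
      integral_const_mul 2 _
    have hil : ∫ ω, (w n ω - w m ω) ^ 2 ∂Q
        = 2 * J mid - J (g n) - J (g m) := by
      rw [integral_congr_ae heqae, e1, e2, e3]
    have hb1 : s n - 1 / (n + 1) < J (g n) := hgJ n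
    have hb2 : s m - 1 / (m + 1) < J (g m) := hgJ m
    have hb3 : sL ≤ s m := hsL_le m
    have hb4 : 1 / (m + 1 : ℝ) ≤ 1 / (n + 1 : ℝ) := by
      apply one_div_le_one_div_of_le (by positivity)
      exact_mod_cast by omega
    have hb5 : sL ≤ s n := hsL_le n
    rw [hil]
    simp only [hδdef]
    have h2d : (2:ℝ) / (n + 1) = 1 / (n+1) + 1 / (n+1) := by ring
    linarith
  -- pass to L²
  haveI : Fact ((1:ENNReal) ≤ 2) := ⟨one_le_two⟩
  have hwmem : ∀ n, MemLp (w n) 2 Q := by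
    intro n
    refine MemLp.of_bound ((hWcont.measurable.comp_aemeasurable (hgmeas n)).aestronglyMeasurable) 1 ?_
    refine Eventually.of_forall fun ω => ?_
    rw [Real.norm_eq_abs, abs_of_pos (Real.exp_pos _)]
    rw [show (1:ℝ) = Real.exp 0 by simp]
    apply Real.exp_le_exp.mpr
    have : (0:ℝ) ≤ max (g n ω + C) 0 := le_max_right _ _
    linarith
  set WL : ℕ → Lp ℝ 2 Q := fun n => (hwmem n).toLp (w n) with hWLdef
  have hnormsq : ∀ n m, dist (WL n) (WL m) ^ 2 = ∫ ω, (w n ω - w m ω) ^ 2 ∂Q := by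
    intro n m
    rw [dist_eq_norm, ← real_inner_self_eq_norm_sq, L2.inner_def]
    refine integral_congr_ae ?_
    filter_upwards [Lp.coeFn_sub (WL n) (WL m), (hwmem n).coeFn_toLp,
      (hwmem m).coeFn_toLp] with ω h1 h2 h3
    rw [h1]
    simp only [hWLdef, Pi.sub_apply, h2, h3, RCLike.inner_apply, conj_trivial]
    ring
  have hdist : ∀ N n m, N ≤ n → N ≤ m → dist (WL n) (WL m) ≤ Real.sqrt (δ N) := by
    intro N n m hn hm
    have hsq : ∫ ω, (w n ω - w m ω) ^ 2 ∂Q ≤ δ N := by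
      rcases le_total n m with h | h
      · exact (hkeyint n m h).trans (hδ_anti hn)
      · have : ∫ ω, (w n ω - w m ω) ^ 2 ∂Q = ∫ ω, (w m ω - w n ω) ^ 2 ∂Q := by
          congr 1; funext ω; ring
        rw [this]
        exact (hkeyint m n h).trans (hδ_anti hm)
    have h1 : dist (WL n) (WL m) = Real.sqrt (dist (WL n) (WL m) ^ 2) :=
      (Real.sqrt_sq dist_nonneg).symm
    rw [h1, hnormsq n m]
    exact Real.sqrt_le_sqrt hsq
  have hδ_tendsto : Tendsto δ atTop (nhds 0) := by
    have t1 : Tendsto (fun n : ℕ => 2 * (s n - sL)) atTop (nhds 0) := by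
      have := (hs_tendsto.sub_const sL).const_mul (2:ℝ)
      simpa using this
    have t2 : Tendsto (fun n : ℕ => 2 / (n + 1 : ℝ)) atTop (nhds 0) := by
      have h := tendsto_one_div_add_atTop_nhds_zero_nat.const_mul (2:ℝ)
      simpa [mul_one_div, div_eq_mul_inv] using h
    have := t1.add t2
    simpa [hδdef] using this
  have hcauchy : CauchySeq WL := by
    refine cauchySeq_of_le_tendsto_0 (fun N => Real.sqrt (δ N))
      (fun n m N hn hm => hdist N n m hn hm) ?_
    have := hδ_tendsto.sqrt
    simpa using this
  obtain ⟨Wlim, hWlim⟩ := cauchySeq_tendsto_of_complete hcauchy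
  have hTIM : TendstoInMeasure Q w atTop (⇑Wlim) := by
    refine (tendstoInMeasure_of_tendsto_Lp hWlim).congr (fun n => (hwmem n).coeFn_toLp) ?_
    exact EventuallyEq.refl _ _
  obtain ⟨κ, hκmono, hκae⟩ := hTIM.exists_seq_tendsto_ae
  set Z : Ω → ℝ := (Lp.aestronglyMeasurable Wlim).mk _ with hZdef
  have hZmeas : Measurable Z := (Lp.aestronglyMeasurable Wlim).stronglyMeasurable_mk.measurable
  have hZae : ⇑Wlim =ᵐ[Q] Z := (Lp.aestronglyMeasurable Wlim).ae_eq_mk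
  have hκae' : ∀ᵐ ω ∂Q, Tendsto (fun k => w (κ k) ω) atTop (nhds (Z ω)) := by
    filter_upwards [hκae, hZae] with ω h1 h2
    rwa [h2] at h1
  -- measurable versions of g
  set gm : ℕ → Ω → ℝ := fun n => (hgmeas n).mk _ with hgmdef
  have hgm_meas : ∀ n, Measurable (gm n) := fun n => (hgmeas n).measurable_mk
  have hgm_eq : ∀ n, g n =ᵐ[Q] gm n := fun n => (hgmeas n).ae_eq_mk
  -- Z is a.e. positive
  have hZpos : ∀ᵐ ω ∂Q, 0 < Z ω := by
    have hnull : Q {ω | Z ω ≤ 0} ≤ 0 := by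
      refine ENNReal.le_of_forall_pos_le_add fun ε hε _ => ?_
      rw [zero_add]
      have hev := hbddA.eventually_lt_const (by exact_mod_cast hε : (0:ENNReal) < ε)
      obtain ⟨R₀, hR₀⟩ := eventually_atTop.mp hev
      set R : ℝ := max R₀ 0 with hRdef
      have hsup : (⨆ x ∈ A, Q {ω | R ≤ |x ω|}) < ε := hR₀ R (le_max_left _ _)
      set S : ℕ → Set Ω := fun K => ⋂ (k) (_ : K ≤ k), {ω | R ≤ gm (κ k) ω} with hSdef
      have hSmono : Monotone S := by
        intro K K' hKK'
        refine Set.iInter₂_mono' fun k hk => ⟨k, hKK'.trans hk, le_refl _⟩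
      have hsub : ∀ᵐ ω ∂Q, ω ∈ {ω | Z ω ≤ 0} → ω ∈ ⋃ K, S K := by
        have hC1 : ∀ᵐ ω ∂Q, ∀ k, -C ≤ g (κ k) ω := by
          rw [ae_all_iff]; intro k; exact (hgae (κ k)).mono fun ω h => h.1
        have hC2 : ∀ᵐ ω ∂Q, ∀ k, g (κ k) ω = gm (κ k) ω := by
          rw [ae_all_iff]; intro k; exact hgm_eq (κ k)
        filter_upwards [hκae', hC1, hC2] with ω htend hC1ω hC2ω hZ0
        set d : ℝ := Real.exp (-(R + C) / 2) with hddef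
        have hd0 : 0 < d := Real.exp_pos _
        have hlt : Z ω < d := lt_of_le_of_lt hZ0 hd0
        obtain ⟨K, hK⟩ := eventually_atTop.mp (htend.eventually_lt_const hlt)
        refine Set.mem_iUnion.mpr ⟨K, ?_⟩
        refine Set.mem_iInter₂.mpr fun k hk => ?_
        have hwk : w (κ k) ω < d := hK k hk
        have hmax : max (g (κ k) ω + C) 0 = g (κ k) ω + C :=
          max_eq_left (by linarith [hC1ω k])
        have hwexp : w (κ k) ω = Real.exp (-(g (κ k) ω + C) / 2) := by
          simp only [hwdef, hWdef, hmax]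
        rw [hwexp, hddef] at hwk
        have := Real.exp_lt_exp.mp hwk
        have hRg : R ≤ g (κ k) ω := by linarith
        show R ≤ gm (κ k) ω
        rwa [← hC2ω k]
      calc Q {ω | Z ω ≤ 0} ≤ Q (⋃ K, S K) := measure_mono_ae hsub
        _ = ⨆ K, Q (S K) := (hSmono.directed_le).measure_iUnion
        _ ≤ ε := by
            refine iSup_le fun K => ?_
            have h1 : S K ⊆ {ω | R ≤ gm (κ K) ω} := by
              intro ω hω
              exact Set.mem_iInter₂.mp hω K (le_refl K)
            have h2 : Q {ω | R ≤ gm (κ K) ω} = Q {ω | R ≤ g (κ K) ω} := by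
              refine measure_congr ?_
              filter_upwards [hgm_eq (κ K)] with ω h
              show (R ≤ gm (κ K) ω) = (R ≤ g (κ K) ω)
              rw [h]
            have h3 : {ω | R ≤ g (κ K) ω} ⊆ {ω | R ≤ |g (κ K) ω|} := by
              intro ω hω
              simp only [Set.mem_setOf_eq] at hω ⊢
              exact le_trans hω (le_abs_self _)
            calc Q (S K) ≤ Q {ω | R ≤ gm (κ K) ω} := measure_mono h1
              _ = Q {ω | R ≤ g (κ K) ω} := h2
              _ ≤ Q {ω | R ≤ |g (κ K) ω|} := measure_mono h3
              _ ≤ ⨆ x ∈ A, Q {ω | R ≤ |x ω|} := le_biSup (fun x : Ω → ℝ => Q {ω | R ≤ |x ω|}) (hgA (κ K))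
              _ ≤ ε := le_of_lt hsup
    rw [ae_iff]
    simp only [not_lt]
    exact le_antisymm hnull (by simp)
  -- the limit function
  set gl : Ω → ℝ := fun ω => -2 * Real.log (Z ω) - C with hgldef
  have hglim : ∀ᵐ ω ∂Q, Tendsto (fun k => g (κ k) ω) atTop (nhds (gl ω)) := by
    have hC1 : ∀ᵐ ω ∂Q, ∀ k, -C ≤ g (κ k) ω := by
      rw [ae_all_iff]; intro k; exact (hgae (κ k)).mono fun ω h => h.1
    filter_upwards [hκae', hZpos, hC1] with ω htend hpos hC1ω
    have hrep : ∀ k, g (κ k) ω = -2 * Real.log (w (κ k) ω) - C := by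
      intro k
      have hmax : max (g (κ k) ω + C) 0 = g (κ k) ω + C :=
        max_eq_left (by linarith [hC1ω k])
      have hwexp : w (κ k) ω = Real.exp (-(g (κ k) ω + C) / 2) := by
        simp only [hwdef, hWdef, hmax]
      rw [hwexp, Real.log_exp]; ring
    have hlog : Tendsto (fun k => -2 * Real.log (w (κ k) ω) - C) atTop
        (nhds (-2 * Real.log (Z ω) - C)) :=
      ((htend.log (ne_of_gt hpos)).const_mul (-2)).sub_const C
    exact hlog.congr fun k => (hrep k).symm
  have hglX : gl ∈ 𝒳 := by
    refine h𝒳closed (fun k => g (κ k)) gl (fun k => hg𝒳 (κ k)) ?_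
    exact tendstoInMeasure_of_tendsto_ae
      (fun k => (hgmeas (κ k)).aestronglyMeasurable) hglim
  refine ⟨gl, hglX, ?_⟩
  have hC2 : ∀ᵐ ω ∂Q, ∀ k, -C ≤ g (κ k) ω ∧ ∀ i ≤ κ k, ψ i ω ≤ g (κ k) ω := by
    rw [ae_all_iff]; intro k; exact hgae (κ k)
  filter_upwards [hglim, hC2] with ω hlim hk
  intro n
  have hev : ∀ᶠ k in atTop, ψ n ω ≤ g (κ k) ω := by
    filter_upwards [eventually_ge_atTop n] with k hkn
    exact (hk k).2 n (hkn.trans hκmono.le_apply)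
  exact ge_of_tendsto hlim hev

/-- The set `𝒳(e_a)` of feasible risk transfers is convex, solid and closed under
convergence in `Q`-probability, provided `𝒳 ⊆ L⁰(Q)` is convex, closed under
convergence in `Q`-probability, and `{x ∈ 𝒳 : x ≥ λ}` is bounded in `Q`-probability
for every `λ ∈ ℝ`, and `e_a ∈ L^∞(Q)`. -/
theorem XSet_convex_solid_closed {Ω : Type*} [MeasurableSpace Ω]
    (Q : Measure Ω) [IsProbabilityMeasure Q]
    (𝒳 : Set (Ω → ℝ)) (h𝒳meas : ∀ x ∈ 𝒳, AEMeasurable x Q)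
    (h𝒳conv : Convex ℝ 𝒳)
    (h𝒳closed : ∀ (f : ℕ → Ω → ℝ) (x : Ω → ℝ), (∀ n, f n ∈ 𝒳) →
      TendstoInMeasure Q f atTop x → x ∈ 𝒳)
    (h𝒳bdd : ∀ lam : ℝ, BddInProb Q {x ∈ 𝒳 | ∀ᵐ ω ∂Q, lam ≤ x ω})
    (e_a : Ω → ℝ) (he_a : MemLp e_a ⊤ Q) :
    Convex ℝ (XSet Q 𝒳 e_a) ∧
      (∀ x ∈ XSet Q 𝒳 e_a, ∀ y : Ω → ℝ, AEMeasurable y Q →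
        (∀ᵐ ω ∂Q, 0 ≤ y ω ∧ y ω ≤ x ω) → y ∈ XSet Q 𝒳 e_a) ∧
      ∀ (f : ℕ → Ω → ℝ) (x : Ω → ℝ), (∀ n, f n ∈ XSet Q 𝒳 e_a) →
        TendstoInMeasure Q f atTop x → x ∈ XSet Q 𝒳 e_a := by
  refine ⟨?_, ?_, ?_⟩
  · -- convexity
    rintro x₁ ⟨hm₁, xb₁, hxb₁, hae₁⟩ x₂ ⟨hm₂, xb₂, hxb₂, hae₂⟩ a c ha hc hac
    refine ⟨(hm₁.const_smul a).add (hm₂.const_smul c), a • xb₁ + c • xb₂,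
      h𝒳conv hxb₁ hxb₂ ha hc hac, ?_⟩
    filter_upwards [hae₁, hae₂] with ω ⟨h10, h1e⟩ ⟨h20, h2e⟩
    constructor
    · have : (0:ℝ) ≤ a * x₁ ω + c * x₂ ω := by positivity
      simpa [Pi.add_apply, Pi.smul_apply, smul_eq_mul] using this
    · have g1 : a * x₁ ω ≤ a * (e_a ω + xb₁ ω) := mul_le_mul_of_nonneg_left h1e ha
      have g2 : c * x₂ ω ≤ c * (e_a ω + xb₂ ω) := mul_le_mul_of_nonneg_left h2e hc
      have he : a * e_a ω + c * e_a ω = e_a ω := by rw [← add_mul, hac, one_mul]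
      have g1' : a * x₁ ω ≤ a * e_a ω + a * xb₁ ω := by rw [← mul_add]; exact g1
      have g2' : c * x₂ ω ≤ c * e_a ω + c * xb₂ ω := by rw [← mul_add]; exact g2
      have : a * x₁ ω + c * x₂ ω ≤ e_a ω + (a * xb₁ ω + c * xb₂ ω) := by linarith
      simpa [Pi.add_apply, Pi.smul_apply, smul_eq_mul] using this
  · -- solid
    rintro x ⟨hmx, xb, hxb, haex⟩ y hmy haey
    refine ⟨hmy, xb, hxb, ?_⟩
    filter_upwards [haex, haey] with ω ⟨hx0, hxe⟩ ⟨hy0, hyx⟩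
    exact ⟨hy0, hyx.trans hxe⟩
  · -- closed in probability
    intro f x hf hconv
    -- extract a.e. convergent subsequence
    obtain ⟨ns, hns_mono, hns_ae⟩ := hconv.exists_seq_tendsto_ae
    have hfmeas : ∀ n, AEMeasurable (f n) Q := fun n => (hf n).1
    have hxmeas : AEMeasurable x Q :=
      aemeasurable_of_tendsto_metrizable_ae atTop (fun k => hfmeas (ns k)) hns_ae
    -- witnesses
    choose xb hxb𝒳 hxbae using fun n => (hf n).2
    set C : ℝ := (eLpNorm e_a ⊤ Q).toReal with hCdef
    have heC : ∀ᵐ ω ∂Q, |e_a ω| ≤ C := by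
      have h1 := ae_le_eLpNormEssSup (f := e_a) (μ := Q)
      have hlt : eLpNormEssSup e_a Q < ⊤ := by
        simpa [eLpNorm_exponent_top] using he_a.2
      filter_upwards [h1] with ω hω
      have := (ENNReal.toReal_le_toReal (by simp) hlt.ne).mpr hω
      simpa [hCdef, eLpNorm_exponent_top] using this
    set y : ℕ → Ω → ℝ := fun k => f (ns k) with hy
    set b : ℕ → Ω → ℝ := fun k => xb (ns k) with hb
    have hball : ∀ᵐ ω ∂Q, ∀ k, 0 ≤ y k ω ∧ y k ω ≤ e_a ω + b k ω := by
      rw [ae_all_iff]; intro k; exact hxbae (ns k)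
    have hbC : ∀ k, ∀ᵐ ω ∂Q, -C ≤ b k ω := by
      intro k
      filter_upwards [hxbae (ns k), heC] with ω h1 h2
      have := h1.1.trans h1.2
      have : -e_a ω ≤ b k ω := by linarith
      have h3 : -C ≤ -e_a ω := by
        have := abs_le.mp h2
        linarith [this.2]
      linarith
    -- the lower functions
    set ψ : ℕ → Ω → ℝ := fun n ω => (⨅ j, y (n + j) ω) - e_a ω with hψdef
    have hψb : ∀ n k, n ≤ k → ∀ᵐ ω ∂Q, ψ n ω ≤ b k ω := by
      intro n k hnk
      filter_upwards [hball] with ω hω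
      have hbdd : BddBelow (Set.range fun j => y (n + j) ω) :=
        ⟨0, by rintro t ⟨j, rfl⟩; exact (hω (n + j)).1⟩
      have h1 : (⨅ j, y (n + j) ω) ≤ y k ω := by
        have := ciInf_le hbdd (k - n)
        simpa [Nat.add_sub_cancel' hnk] using this
      have h2 := (hω k).2
      simp only [hψdef]
      linarith
    obtain ⟨g, hg𝒳, hgae⟩ := komlos Q 𝒳 h𝒳meas h𝒳conv h𝒳closed C (h𝒳bdd (-C))
      b (fun k => hxb𝒳 (ns k)) hbC ψ hψb
    refine ⟨hxmeas, g, hg𝒳, ?_⟩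
    filter_upwards [hns_ae, hball, hgae] with ω hlim hall hgψ
    have hx0 : 0 ≤ x ω := le_of_tendsto_of_tendsto' tendsto_const_nhds hlim
      (fun k => (hall k).1)
    refine ⟨hx0, ?_⟩
    -- x ω ≤ e_a ω + g ω
    have key : ∀ ε > (0:ℝ), x ω ≤ e_a ω + g ω + ε := by
      intro ε hε
      obtain ⟨N, hN⟩ := (Metric.tendsto_atTop.mp hlim) ε hε
      have hψN : x ω - ε ≤ (⨅ j, y (N + j) ω) := by
        refine le_ciInf fun j => ?_
        have := hN (N + j) (Nat.le_add_right _ _)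
        have := abs_lt.mp (by simpa [Real.dist_eq] using this)
        linarith [this.1]
      have := hgψ N
      simp only [hψdef] at this
      linarith
    linarith [le_of_forall_pos_le_add key]
end

section
/- Let (Ω, F, Q) be a probability space, u : [0, ∞) → ℝ continuous, strictly increasing and concave, and let 𝒦 ⊆ L⁰₊(Q) be a convex and solid set of nonnegative random variables (i.e., if x ∈ 𝒦 and 0 ≤ y ≤ x a.s. then y ∈ 𝒦). Then the set C := {u ∘ x : x ∈ 𝒦} is convex: for all x, x̄ ∈ 𝒦 and β ∈ [0, 1], there exists z ∈ 𝒦 with u ∘ z = β (u ∘ x) + (1 − β)(u ∘ x̄) a.s. -/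
open MeasureTheory

/-- Convexity of the set of utility levels over a convex solid set of nonnegative
random variables: if `u : [0, ∞) → ℝ` is continuous, strictly increasing and concave
and `𝒦 ⊆ L⁰₊(Q)` is convex and solid, then for all `x, x̄ ∈ 𝒦` and `β ∈ [0, 1]` there
is `z ∈ 𝒦` with `u ∘ z = β (u ∘ x) + (1 - β) (u ∘ x̄)` almost surely; that is,
`C = {u ∘ x : x ∈ 𝒦}` is convex. -/
theorem utility_levels_convex {Ω : Type*} [MeasurableSpace Ω]
    (Q : Measure Ω) [IsProbabilityMeasure Q]
    (u : ℝ → ℝ)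
    (hu_cont : ContinuousOn u (Set.Ici 0))
    (hu_mono : StrictMonoOn u (Set.Ici 0))
    (hu_conc : ConcaveOn ℝ (Set.Ici 0) u)
    (𝒦 : Set (Ω → ℝ))
    (h𝒦 : ∀ x ∈ 𝒦, AEMeasurable x Q ∧ ∀ᵐ ω ∂Q, 0 ≤ x ω)
    (h𝒦conv : Convex ℝ 𝒦)
    (h𝒦solid : ∀ x ∈ 𝒦, ∀ y : Ω → ℝ, AEMeasurable y Q →
      (∀ᵐ ω ∂Q, 0 ≤ y ω ∧ y ω ≤ x ω) → y ∈ 𝒦) :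
    ∀ x ∈ 𝒦, ∀ xb ∈ 𝒦, ∀ β : ℝ, 0 ≤ β → β ≤ 1 →
      ∃ z ∈ 𝒦, ∀ᵐ ω ∂Q, u (z ω) = β * u (x ω) + (1 - β) * u (xb ω) := by
  intro x hx xb hxb β hβ0 hβ1
  classical
  -- reparametrize [0,∞) through g : [0,1) → [0,∞)
  set g : ℝ → ℝ := fun r => r / (1 - r) with hg
  have hgmeas : Measurable g := measurable_id.div (measurable_const.sub measurable_id)
  -- generalized inverse of u ∘ g, valued in [0,1)
  set S : ℝ → Set ℝ := fun t => {r | 0 ≤ r ∧ r < 1 ∧ u (g r) ≤ t} with hS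
  set w : ℝ → ℝ := fun t => sSup (S t) with hw
  have hbdd : ∀ t, BddAbove (S t) := fun t => ⟨1, fun r hr => hr.2.1.le⟩
  -- w is monotone, hence measurable
  have hwmono : Monotone w := by
    intro t t' htt'
    by_cases h : (S t).Nonempty
    · exact csSup_le_csSup (hbdd t') h (fun r hr => ⟨hr.1, hr.2.1, hr.2.2.trans htt'⟩)
    · rw [Set.not_nonempty_iff_eq_empty] at h
      have h0 : w t = 0 := by simp [hw, h, Real.sSup_empty]
      rw [h0]
      by_cases h' : (S t').Nonempty
      · obtain ⟨r, hr⟩ := h'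
        exact le_trans hr.1 (le_csSup (hbdd t') hr)
      · rw [Set.not_nonempty_iff_eq_empty] at h'
        simp [hw, h', Real.sSup_empty]
  -- w inverts u ∘ g
  have hwinv : ∀ s₀ : ℝ, 0 ≤ s₀ → w (u s₀) = s₀ / (1 + s₀) := by
    intro s₀ hs₀
    have hd : (0:ℝ) < 1 + s₀ := by linarith
    have hr₀0 : 0 ≤ s₀ / (1 + s₀) := by positivity
    have hr₀1 : s₀ / (1 + s₀) < 1 := by rw [div_lt_one hd]; linarith
    have hgr₀ : g (s₀ / (1 + s₀)) = s₀ := by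
      rw [hg]
      field_simp
      ring
    refine IsGreatest.csSup_eq ⟨⟨hr₀0, hr₀1, by rw [hgr₀]⟩, fun r hr => ?_⟩
    by_contra hlt
    push_neg at hlt
    have hr1 : (0:ℝ) < 1 - r := by linarith [hr.2.1]
    have hr₀1' : (0:ℝ) < 1 - s₀ / (1 + s₀) := by linarith
    have hglt : s₀ < g r := by
      rw [← hgr₀, hg]
      rw [div_lt_div_iff₀ hr₀1' hr1]
      nlinarith
    have hgr0 : 0 ≤ g r := div_nonneg hr.1 hr1.le
    have := hu_mono (Set.mem_Ici.mpr hs₀) (Set.mem_Ici.mpr hgr0) hglt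
    exact absurd hr.2.2 (not_le.mpr this)
  -- a continuous modification of u, for measurability
  set ut : ℝ → ℝ := fun t => u (max t 0) with hut
  have hutcont : Continuous ut :=
    hu_cont.comp_continuous (continuous_id.max continuous_const)
      (fun t => Set.mem_Ici.mpr (le_max_right t 0))
  -- the candidate z
  set z : Ω → ℝ := fun ω => g (w (β * ut (x ω) + (1 - β) * ut (xb ω))) with hz
  have hxm := (h𝒦 x hx).1
  have hxbm := (h𝒦 xb hxb).1
  have hzm : AEMeasurable z Q := by
    apply (hgmeas.comp hwmono.measurable).comp_aemeasurable
    exact (((hutcont.measurable.comp_aemeasurable hxm).const_mul β)).add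
      (((hutcont.measurable.comp_aemeasurable hxbm).const_mul (1 - β)))
  -- pointwise properties of z
  have hae : ∀ᵐ ω ∂Q, 0 ≤ z ω ∧ z ω ≤ β * x ω + (1 - β) * xb ω ∧
      u (z ω) = β * u (x ω) + (1 - β) * u (xb ω) := by
    filter_upwards [(h𝒦 x hx).2, (h𝒦 xb hxb).2] with ω ha hb
    set a := x ω
    set b := xb ω
    have huta : ut a = u a := by simp [hut, max_eq_left ha]
    have hutb : ut b = u b := by simp [hut, max_eq_left hb]
    set c : ℝ := β * u a + (1 - β) * u b with hc
    have hm1 : (0 : ℝ) ≤ min a b := le_min ha hb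
    have hm1a : u (min a b) ≤ u a :=
      hu_mono.monotoneOn (Set.mem_Ici.mpr hm1) (Set.mem_Ici.mpr ha) (min_le_left a b)
    have hm1b : u (min a b) ≤ u b :=
      hu_mono.monotoneOn (Set.mem_Ici.mpr hm1) (Set.mem_Ici.mpr hb) (min_le_right a b)
    have hm2a : u a ≤ u (max a b) :=
      hu_mono.monotoneOn (Set.mem_Ici.mpr ha) (Set.mem_Ici.mpr (le_trans ha (le_max_left a b)))
        (le_max_left a b)
    have hm2b : u b ≤ u (max a b) :=
      hu_mono.monotoneOn (Set.mem_Ici.mpr hb) (Set.mem_Ici.mpr (le_trans ha (le_max_left a b)))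
        (le_max_right a b)
    have hclo : u (min a b) ≤ c := by nlinarith
    have hchi : c ≤ u (max a b) := by nlinarith
    -- intermediate value theorem
    have hsub : Set.Icc (min a b) (max a b) ⊆ Set.Ici 0 :=
      fun t ht => Set.mem_Ici.mpr (le_trans hm1 ht.1)
    have hivt := intermediate_value_Icc (min_le_max (a := a) (b := b)) (hu_cont.mono hsub)
    obtain ⟨s, hsmem, hus⟩ := hivt ⟨hclo, hchi⟩
    have hs0 : 0 ≤ s := le_trans hm1 hsmem.1
    have hds : (0:ℝ) < 1 + s := by linarith
    have hgs : g (s / (1 + s)) = s := by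
      rw [hg]; field_simp; ring
    have hzω : z ω = s := by
      rw [hz]
      simp only [huta, hutb]
      rw [show β * ut (x ω) + (1 - β) * ut (xb ω) = c from by rw [hc, ← huta, ← hutb], ← hus, hwinv s hs0, hgs]
    -- concavity gives the domination
    have hcomb0 : 0 ≤ β * a + (1 - β) * b := by nlinarith
    have hcc := hu_conc.2 (Set.mem_Ici.mpr ha) (Set.mem_Ici.mpr hb) hβ0
      (by linarith : (0:ℝ) ≤ 1 - β) (by ring)
    have hcc' : c ≤ u (β * a + (1 - β) * b) := by
      simpa [smul_eq_mul, hc] using hcc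
    have hsle : s ≤ β * a + (1 - β) * b := by
      by_contra hlt
      push_neg at hlt
      have := hu_mono (Set.mem_Ici.mpr hcomb0) (Set.mem_Ici.mpr hs0) hlt
      rw [hus] at this
      linarith
    exact ⟨hzω ▸ hs0, hzω ▸ hsle, by rw [hzω, hus]⟩
  -- the convex combination lies in 𝒦
  have hm : (β • x + (1 - β) • xb) ∈ 𝒦 := h𝒦conv hx hxb hβ0 (by linarith) (by ring)
  refine ⟨z, h𝒦solid _ hm z hzm ?_, ?_⟩
  · filter_upwards [hae] with ω hω
    refine ⟨hω.1, ?_⟩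
    simpa [Pi.add_apply, Pi.smul_apply, smul_eq_mul] using hω.2.1
  · filter_upwards [hae] with ω hω
    exact hω.2.2
end

section
/- Let (Ω, F, Q) be a probability space and ρ : Ω → ℝ a measurable density with c₁ ≤ ρ ≤ c₂ a.s. for constants 0 < c₁ ≤ c₂ and E_Q[ρ] = 1; let P be the probability measure with dP/dQ = ρ. Fix α > 0 and e_a ∈ L^∞(Q), set m := E_P[e_a] and H(P|Q) := E_Q[ρ log ρ]. Define x* := −(1/α) log ρ + m + (1/α) H(P|Q). Then E_P[x*] = m (so x* satisfies the budget constraint E_P[x* − e_a] ≤ 0), and for every x ∈ L¹(Q) with E_P[x] ≤ m one has E_Q[1 − e^{−α x}] ≤ 1 − e^{−α m − H(P|Q)}, where E_Q[e^{−α x}] ∈ (0, ∞] is understood as the (possibly infinite) integral of the nonnegative function e^{−α x}; moreover E_Q[1 − e^{−α x*}] = 1 − e^{−α m − H(P|Q)}, so x* maximizes the expected exponential utility E_Q[1 − e^{−α ·}] over the budget set {x ∈ L¹(Q) : E_P[x − e_a] ≤ 0}. -/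
open MeasureTheory ENNReal

private lemma ofReal_integral_le_lintegral_ofReal' {Ω : Type*} [MeasurableSpace Ω]
    {Q : Measure Ω} {f : Ω → ℝ} (hf : Integrable f Q) :
    ENNReal.ofReal (∫ ω, f ω ∂Q) ≤ ∫⁻ ω, ENNReal.ofReal (f ω) ∂Q := by
  have hmax : Integrable (fun ω => max (f ω) 0) Q := hf.pos_part
  calc ENNReal.ofReal (∫ ω, f ω ∂Q)
      ≤ ENNReal.ofReal (∫ ω, max (f ω) 0 ∂Q) := by
        exact ENNReal.ofReal_le_ofReal
          (integral_mono hf hmax (fun ω => le_max_left _ _))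
    _ = ∫⁻ ω, ENNReal.ofReal (max (f ω) 0) ∂Q :=
        ofReal_integral_eq_lintegral_ofReal hmax
          (Filter.Eventually.of_forall fun ω => le_max_right _ _)
    _ = ∫⁻ ω, ENNReal.ofReal (f ω) ∂Q := by
        refine lintegral_congr fun ω => ?_
        rcases le_total 0 (f ω) with h | h
        · rw [max_eq_left h]
        · rw [max_eq_right h, ENNReal.ofReal_zero,
            ENNReal.ofReal_eq_zero.mpr h]

/-- Optimality of the exponential-utility optimal payoff (Lemma 11 of the paper).
Let `ρ = dP/dQ` be a density bounded between positive constants with `E_Q[ρ] = 1`,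
`α > 0`, `e_a ∈ L^∞(Q)`, `m = E_P[e_a]`, `H = H(P|Q) = E_Q[ρ log ρ]`, and
`x* = -(1/α) log ρ + m + (1/α) H`. Then `E_P[x*] = m` (so `E_P[x* - e_a] ≤ 0`), for
every `x ∈ L¹(Q)` with `E_P[x - e_a] ≤ 0` one has
`E_Q[1 - e^{-α x}] ≤ 1 - e^{-α m - H}` (the expectation of `e^{-α x}` being the
possibly infinite integral of a nonnegative function, so that the utility is valued in
`EReal`), and `x*` attains this bound. -/
theorem exp_utility_optimal_payoff {Ω : Type*} [MeasurableSpace Ω]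
    (Q : Measure Ω) [IsProbabilityMeasure Q]
    (ρ : Ω → ℝ) (hρ_meas : Measurable ρ)
    (c₁ c₂ : ℝ) (hc₁ : 0 < c₁) (hc₁₂ : c₁ ≤ c₂)
    (hρ_bdd : ∀ᵐ ω ∂Q, c₁ ≤ ρ ω ∧ ρ ω ≤ c₂)
    (hρ_one : ∫ ω, ρ ω ∂Q = 1)
    (α : ℝ) (hα : 0 < α)
    (e_a : Ω → ℝ) (he_a : MemLp e_a ⊤ Q)
    (m H : ℝ)
    (hm : m = ∫ ω, ρ ω * e_a ω ∂Q)
    (hH : H = ∫ ω, ρ ω * Real.log (ρ ω) ∂Q)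
    (xstar : Ω → ℝ)
    (hxstar : xstar = fun ω => -(1 / α) * Real.log (ρ ω) + m + (1 / α) * H) :
    ((∫ ω, ρ ω * xstar ω ∂Q = m) ∧ ∫ ω, ρ ω * (xstar ω - e_a ω) ∂Q ≤ 0) ∧
      (∀ x : Ω → ℝ, Integrable x Q → ∫ ω, ρ ω * (x ω - e_a ω) ∂Q ≤ 0 →
        (1 : EReal) -
            ((∫⁻ ω, ENNReal.ofReal (Real.exp (-(α * x ω))) ∂Q : ℝ≥0∞) : EReal) ≤
          ((1 - Real.exp (-(α * m) - H) : ℝ) : EReal)) ∧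
      (1 : EReal) -
          ((∫⁻ ω, ENNReal.ofReal (Real.exp (-(α * xstar ω))) ∂Q : ℝ≥0∞) : EReal) =
        ((1 - Real.exp (-(α * m) - H) : ℝ) : EReal) := by
  set c : ℝ := Real.exp (-(α * m) - H) with hc
  have hcpos : 0 < c := Real.exp_pos _
  -- basic integrability facts
  have hρ_int : Integrable ρ Q := by
    refine Integrable.mono' (integrable_const c₂) hρ_meas.aestronglyMeasurable ?_
    filter_upwards [hρ_bdd] with ω hω
    rw [Real.norm_eq_abs, abs_of_nonneg (hc₁.le.trans hω.1)]
    exact hω.2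
  have hlog_meas : Measurable fun ω => Real.log (ρ ω) := hρ_meas.log
  have hρlog_int : Integrable (fun ω => ρ ω * Real.log (ρ ω)) Q := by
    refine Integrable.mono' (integrable_const (c₂ * max |Real.log c₁| |Real.log c₂|))
      (hρ_meas.mul hlog_meas).aestronglyMeasurable ?_
    filter_upwards [hρ_bdd] with ω hω
    rw [Real.norm_eq_abs, abs_mul, abs_of_nonneg (hc₁.le.trans hω.1)]
    refine mul_le_mul hω.2 ?_ (abs_nonneg _) (hc₁.le.trans hc₁₂)
    exact abs_le_max_abs_abs (Real.log_le_log hc₁ hω.1)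
      (Real.log_le_log (lt_of_lt_of_le hc₁ hω.1) hω.2)
  have hlog_int : Integrable (fun ω => Real.log (ρ ω)) Q := by
    refine Integrable.mono' (integrable_const (max |Real.log c₁| |Real.log c₂|))
      hlog_meas.aestronglyMeasurable ?_
    filter_upwards [hρ_bdd] with ω hω
    rw [Real.norm_eq_abs]
    exact abs_le_max_abs_abs (Real.log_le_log hc₁ hω.1)
      (Real.log_le_log (lt_of_lt_of_le hc₁ hω.1) hω.2)
  have he_int : Integrable e_a Q := he_a.integrable le_top
  have hρe_int : Integrable (fun ω => ρ ω * e_a ω) Q := by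
    refine Integrable.mono' (he_int.norm.const_mul c₂)
      (hρ_meas.aestronglyMeasurable.mul he_a.aestronglyMeasurable) ?_
    filter_upwards [hρ_bdd] with ω hω
    rw [Real.norm_eq_abs, abs_mul, abs_of_nonneg (hc₁.le.trans hω.1)]
    exact mul_le_mul_of_nonneg_right hω.2 (abs_nonneg _)
  -- general product integrability
  have hρx_int : ∀ x : Ω → ℝ, Integrable x Q → Integrable (fun ω => ρ ω * x ω) Q := by
    intro x hx
    refine Integrable.mono' (hx.norm.const_mul c₂)
      (hρ_meas.aestronglyMeasurable.mul hx.aestronglyMeasurable) ?_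
    filter_upwards [hρ_bdd] with ω hω
    rw [Real.norm_eq_abs, abs_mul, abs_of_nonneg (hc₁.le.trans hω.1)]
    exact mul_le_mul_of_nonneg_right hω.2 (abs_nonneg _)
  -- Part 1: E_P[x*] = m
  have hpart1 : ∫ ω, ρ ω * xstar ω ∂Q = m := by
    have heq : (fun ω => ρ ω * xstar ω) =
        fun ω => (-(1 / α)) * (ρ ω * Real.log (ρ ω)) + (m + (1 / α) * H) * ρ ω := by
      funext ω; rw [hxstar]; ring
    rw [heq, integral_add ((hρlog_int.const_mul _)) (hρ_int.const_mul _),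
      integral_const_mul, integral_const_mul, hρ_one, ← hH]
    field_simp
    ring
  have hxstar_int : Integrable xstar Q := by
    rw [hxstar]
    exact ((hlog_int.const_mul _).add (integrable_const m)).add (integrable_const _)
  have hρxstar_int : Integrable (fun ω => ρ ω * xstar ω) Q := hρx_int xstar hxstar_int
  have hbudget_eq : ∀ x : Ω → ℝ, Integrable x Q →
      ∫ ω, ρ ω * (x ω - e_a ω) ∂Q = (∫ ω, ρ ω * x ω ∂Q) - m := by
    intro x hx
    have heq : (fun ω => ρ ω * (x ω - e_a ω)) =
        fun ω => ρ ω * x ω - ρ ω * e_a ω := by funext ω; ring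
    rw [heq, integral_sub (hρx_int x hx) hρe_int, hm]
  -- Part 2: the inequality for arbitrary budget-feasible x
  have hkey : ∀ x : Ω → ℝ, Integrable x Q → (∫ ω, ρ ω * x ω ∂Q) ≤ m →
      ENNReal.ofReal c ≤ ∫⁻ ω, ENNReal.ofReal (Real.exp (-(α * x ω))) ∂Q := by
    intro x hx hxm
    set g : Ω → ℝ := fun ω => c * (ρ ω * (1 + (α * m + H - α * x ω - Real.log (ρ ω)))) with hg
    have hg_int : Integrable g Q := by
      have : g = fun ω => c * (ρ ω + ((α * m + H) * ρ ω - α * (ρ ω * x ω)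
          - ρ ω * Real.log (ρ ω))) := by funext ω; rw [hg]; ring
      rw [this]
      exact ((hρ_int.add (((hρ_int.const_mul _).sub
        ((hρx_int x hx).const_mul _)).sub hρlog_int)).const_mul c)
    have hpt : ∀ᵐ ω ∂Q, g ω ≤ Real.exp (-(α * x ω)) := by
      filter_upwards [hρ_bdd] with ω hω
      have hρpos : 0 < ρ ω := lt_of_lt_of_le hc₁ hω.1
      set A : ℝ := α * m + H - α * x ω - Real.log (ρ ω) with hA
      have h1 : Real.exp (-(α * x ω)) = ρ ω * (c * Real.exp A) := by
        have e : -(α * x ω) = Real.log (ρ ω) + ((-(α * m) - H) + A) := by rw [hA]; ring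
        rw [e, Real.exp_add, Real.exp_add, Real.exp_log hρpos, hc]
      rw [h1, hg]
      have h2 : 1 + A ≤ Real.exp A := by
        have := Real.add_one_le_exp A
        linarith
      calc c * (ρ ω * (1 + A)) = (ρ ω * c) * (1 + A) := by ring
        _ ≤ (ρ ω * c) * Real.exp A :=
            mul_le_mul_of_nonneg_left h2 (by positivity)
        _ = ρ ω * (c * Real.exp A) := by ring
    have hgint : c ≤ ∫ ω, g ω ∂Q := by
      have heq : ∫ ω, g ω ∂Q = ∫ ω, (c * ρ ω + (c * (α * m + H)) * ρ ω
            - (c * α) * (ρ ω * x ω) - c * (ρ ω * Real.log (ρ ω))) ∂Q := by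
        refine integral_congr_ae (Filter.Eventually.of_forall fun ω => ?_)
        rw [hg]; ring
      have i1 : Integrable (fun ω => c * ρ ω + c * (α * m + H) * ρ ω) Q :=
        (hρ_int.const_mul _).add (hρ_int.const_mul _)
      have i2 : Integrable
          (fun ω => c * ρ ω + c * (α * m + H) * ρ ω - c * α * (ρ ω * x ω)) Q :=
        i1.sub ((hρx_int x hx).const_mul _)
      have hval : ∫ ω, g ω ∂Q
          = c * (1 + (α * m + H - α * (∫ ω, ρ ω * x ω ∂Q) - H)) := by
        rw [heq, integral_sub i2 (hρlog_int.const_mul _),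
          integral_sub i1 ((hρx_int x hx).const_mul _),
          integral_add (hρ_int.const_mul _) (hρ_int.const_mul _),
          integral_const_mul, integral_const_mul, integral_const_mul, integral_const_mul,
          hρ_one, ← hH]
        ring
      rw [hval]
      nlinarith [mul_nonneg (mul_nonneg hcpos.le hα.le)
        (sub_nonneg.mpr hxm)]
    calc ENNReal.ofReal c ≤ ENNReal.ofReal (∫ ω, g ω ∂Q) := ENNReal.ofReal_le_ofReal hgint
      _ ≤ ∫⁻ ω, ENNReal.ofReal (g ω) ∂Q := ofReal_integral_le_lintegral_ofReal' hg_int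
      _ ≤ ∫⁻ ω, ENNReal.ofReal (Real.exp (-(α * x ω))) ∂Q := by
          refine lintegral_mono_ae ?_
          filter_upwards [hpt] with ω hω
          exact ENNReal.ofReal_le_ofReal hω
  -- conversion to the EReal statement
  have hconv : ∀ L : ℝ≥0∞, ENNReal.ofReal c ≤ L →
      (1 : EReal) - (L : EReal) ≤ ((1 - c : ℝ) : EReal) := by
    intro L hL
    have h1 : ((1 - c : ℝ) : EReal) = (1 : EReal) - ((ENNReal.ofReal c : ℝ≥0∞) : EReal) := by
      rw [EReal.coe_ennreal_ofReal, max_eq_left hcpos.le]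
      norm_cast
    rw [h1]
    exact EReal.sub_le_sub le_rfl (EReal.coe_ennreal_le_coe_ennreal_iff.mpr hL)
  refine ⟨⟨hpart1, by rw [hbudget_eq xstar hxstar_int, hpart1]; simp⟩, ?_, ?_⟩
  · intro x hx hb
    rw [hbudget_eq x hx] at hb
    exact hconv _ (hkey x hx (by linarith))
  · -- equality for xstar
    have heqpt : ∀ᵐ ω ∂Q, ENNReal.ofReal (Real.exp (-(α * xstar ω)))
        = ENNReal.ofReal (ρ ω) * ENNReal.ofReal c := by
      filter_upwards [hρ_bdd] with ω hω
      have hρpos : 0 < ρ ω := lt_of_lt_of_le hc₁ hω.1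
      have h1 : Real.exp (-(α * xstar ω)) = ρ ω * c := by
        rw [hxstar, hc]
        have : -(α * (-(1 / α) * Real.log (ρ ω) + m + (1 / α) * H))
            = Real.log (ρ ω) + (-(α * m) - H) := by field_simp; ring
        rw [this, Real.exp_add, Real.exp_log hρpos]
      rw [h1, ENNReal.ofReal_mul hρpos.le]
    have hlin : (∫⁻ ω, ENNReal.ofReal (Real.exp (-(α * xstar ω))) ∂Q)
        = ENNReal.ofReal c := by
      rw [lintegral_congr_ae heqpt, lintegral_mul_const _ (hρ_meas.ennreal_ofReal),
        ← ofReal_integral_eq_lintegral_ofReal hρ_int ?_, hρ_one]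
      · simp
      · filter_upwards [hρ_bdd] with ω hω
        exact hc₁.le.trans hω.1
    rw [hlin, EReal.coe_ennreal_ofReal, max_eq_left hcpos.le]
    norm_cast
end
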